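/- arXiv:0812.2306 — 3 statements merged into one kernel-verified Lean document; each statement's English description precedes it below -/
import Mathlib

section
/- Let σ be the unique field automorphism of F = ℚ(q, z_1,…,z_l) fixing ℚ with σ(q) = q^{−1} and σ(z_i) = z_i^{−1} for all i. Then for every m ∈ ℕ^l, σ(J_m) = q^{(1/2)∑_{i,j} B_{ij} m_i m_j} · z^m · J_m, where z^m = ∏_i z_i^{m_i}. -/
/- STATEMENT 9: Let σ be the field automorphism of F = ℚ(q,z_1,…,z_l) with
   σ(q)=q⁻¹ and σ(z_i)=z_i⁻¹ (any ring automorphism automatically fixes ℚ).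
   Then σ(J_m) = q^{(1/2)∑ B_{ij} m_i m_j} z^m J_m, where (J_m) is the unique
   family with J_0 = 1 satisfying the fermionic recursion. -/

noncomputable section

open scoped BigOperators

/-- The field ℚ(q, z_1, …, z_l). -/
abbrev FF (l : ℕ) : Type := FractionRing (MvPolynomial (Fin (l + 1)) ℚ)

/-- the variable q -/
def qv (l : ℕ) : FF l :=
  algebraMap (MvPolynomial (Fin (l + 1)) ℚ) (FF l) (MvPolynomial.X 0)

/-- the variables z_i -/
def zv (l : ℕ) (i : Fin l) : FF l :=
  algebraMap (MvPolynomial (Fin (l + 1)) ℚ) (FF l) (MvPolynomial.X i.succ)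

/-- `W(a) = (1/2)∑ B_{ij} a_i a_j − ∑ d_i a_i`  (the double sum is even, so
integer division by 2 gives the exact value). -/
def W9 {l : ℕ} (B : Matrix (Fin l) (Fin l) ℤ) (d : Fin l → ℕ) (a : Fin l → ℕ) : ℤ :=
  (∑ i, ∑ j, B i j * a i * a j) / 2 - ∑ i, (d i : ℤ) * a i

/-- `(Q;Q)_n = ∏_{k=1}^n (1 − Q^k)` -/
def pochQ {F : Type} [Field F] (Q : F) (n : ℕ) : F :=
  ∏ k ∈ Finset.range n, (1 - Q ^ (k + 1))

/-- `J` is the family of rational functions satisfying `J 0 = 1` and the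
fermionic recursion with variables `q`, `z`. -/
def IsFerm {l : ℕ} (B : Matrix (Fin l) (Fin l) ℤ) (d : Fin l → ℕ)
    {F : Type} [Field F] (q : F) (z : Fin l → F) (J : (Fin l → ℕ) → F) : Prop :=
  J 0 = 1 ∧ ∀ m : Fin l → ℕ, J m = ∑ a ∈ Finset.Iic m,
    (∏ i, z i ^ a i) * q ^ (W9 B d a) *
      (∏ i, pochQ (q ^ d i) (m i - a i))⁻¹ * J a

namespace S9
open Finset

/-! ### Triangular numbers as sums -/

def cc (n : ℕ) : ℕ := ∑ j ∈ Finset.range n, j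
def tt (n : ℕ) : ℕ := ∑ j ∈ Finset.range n, (j + 1)

lemma cc_succ (n : ℕ) : cc (n + 1) = cc n + n := by simp [cc, Finset.sum_range_succ]
lemma tt_succ (n : ℕ) : tt (n + 1) = tt n + (n + 1) := by simp [tt, Finset.sum_range_succ]
lemma tt_eq (n : ℕ) : tt n = cc n + n := by simp [cc, tt, Finset.sum_add_distrib]

/-! ### Basic Pochhammer lemmas -/

variable {F : Type} [Field F]

lemma pochQ_zero (Q : F) : pochQ Q 0 = 1 := by simp [pochQ]
lemma pochQ_succ (Q : F) (n : ℕ) : pochQ Q (n + 1) = pochQ Q n * (1 - Q ^ (n + 1)) := by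
  simp [pochQ, Finset.prod_range_succ]

lemma pochQ_ne_zero (Q : F) (hQ : ∀ k : ℕ, 1 - Q ^ (k + 1) ≠ 0) (n : ℕ) : pochQ Q n ≠ 0 := by
  induction n with
  | zero => simp [pochQ]
  | succ n ih => rw [pochQ_succ]; exact mul_ne_zero ih (hQ n)

lemma poch_cancel (Q : F) (hQ : ∀ k : ℕ, 1 - Q ^ (k + 1) ≠ 0) (k j : ℕ) :
    (1 - Q ^ (j + 1)) * (pochQ Q k * pochQ Q (j + 1))⁻¹ = (pochQ Q k * pochQ Q j)⁻¹ := by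
  have h1 : pochQ Q k ≠ 0 := pochQ_ne_zero Q hQ k
  have h2 : pochQ Q j ≠ 0 := pochQ_ne_zero Q hQ j
  have h3 : (1 - Q ^ (j + 1)) ≠ 0 := hQ j
  rw [pochQ_succ]
  field_simp

/-- inversion of `pochQ` under `Q ↦ Q⁻¹` -/
lemma pochQ_inv (Q : F) (hQ0 : Q ≠ 0) (n : ℕ) :
    pochQ Q⁻¹ n = (-1 : F) ^ n * (Q ^ tt n)⁻¹ * pochQ Q n := by
  induction n with
  | zero => simp [pochQ, tt]
  | succ n ih =>
    have hpow : (Q : F) ^ (n + 1) ≠ 0 := pow_ne_zero _ hQ0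
    have hfac : 1 - (Q⁻¹ : F) ^ (n + 1) = -(Q ^ (n + 1))⁻¹ * (1 - Q ^ (n + 1)) := by
      field_simp
      rw [div_pow, one_pow, sub_mul, one_div, inv_mul_cancel₀ hpow]; ring
    rw [pochQ_succ, ih, hfac, pochQ_succ, tt_succ, pow_add, pow_succ]
    field_simp
    ring

/-! ### Euler's inversion identity -/

/-- the Euler sum -/
def eS (Q : F) (n : ℕ) : F :=
  ∑ p ∈ Finset.HasAntidiagonal.antidiagonal n,
    (-1 : F) ^ p.1 * Q ^ cc p.1 * (pochQ Q p.1 * pochQ Q p.2)⁻¹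

lemma eS_zero (Q : F) : eS Q 0 = 1 := by simp [eS, pochQ, cc]

lemma eS_key (Q : F) (hQ : ∀ k : ℕ, 1 - Q ^ (k + 1) ≠ 0) (n : ℕ) :
    (1 - Q ^ (n + 1)) * eS Q (n + 1) = (1 - Q ^ n) * eS Q n := by
  have hpne := pochQ_ne_zero Q hQ
  rw [eS, Finset.mul_sum]
  have split : ∀ p ∈ Finset.HasAntidiagonal.antidiagonal (n + 1),
      (1 - Q ^ (n + 1)) * ((-1 : F) ^ p.1 * Q ^ cc p.1 * (pochQ Q p.1 * pochQ Q p.2)⁻¹)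
      = (-1 : F) ^ p.1 * Q ^ cc p.1 * ((1 - Q ^ p.2) * (pochQ Q p.1 * pochQ Q p.2)⁻¹)
        + (-1 : F) ^ p.1 * Q ^ cc p.1 * (Q ^ p.2 * ((1 - Q ^ p.1) * (pochQ Q p.1 * pochQ Q p.2)⁻¹)) := by
    rintro ⟨k, j⟩ hp
    rw [Finset.HasAntidiagonal.mem_antidiagonal] at hp
    have hpow : Q ^ j * Q ^ k = Q ^ (n + 1) := by rw [← pow_add, Nat.add_comm, hp]
    have h1 : pochQ Q k ≠ 0 := hpne k
    have h2 : pochQ Q j ≠ 0 := hpne j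
    field_simp
    linear_combination (Q ^ cc k) * hpow
  rw [Finset.sum_congr rfl split, Finset.sum_add_distrib]
  have h1 : ∑ p ∈ Finset.HasAntidiagonal.antidiagonal (n + 1),
      (-1 : F) ^ p.1 * Q ^ cc p.1 * ((1 - Q ^ p.2) * (pochQ Q p.1 * pochQ Q p.2)⁻¹)
      = eS Q n := by
    rw [Finset.Nat.sum_antidiagonal_succ']
    have hz : ((-1 : F) ^ (n+1) * Q ^ cc (n+1) * ((1 - Q ^ 0) * (pochQ Q (n+1) * pochQ Q 0)⁻¹)) = 0 := by
      simp
    rw [hz, zero_add, eS]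
    refine Finset.sum_congr rfl ?_
    rintro ⟨k, j⟩ _
    rw [poch_cancel Q hQ]
  have h2 : ∑ p ∈ Finset.HasAntidiagonal.antidiagonal (n + 1),
      (-1 : F) ^ p.1 * Q ^ cc p.1 * (Q ^ p.2 * ((1 - Q ^ p.1) * (pochQ Q p.1 * pochQ Q p.2)⁻¹))
      = -(Q ^ n) * eS Q n := by
    rw [Finset.Nat.sum_antidiagonal_succ]
    have hz : ((-1 : F) ^ 0 * Q ^ cc 0 * (Q ^ (n+1) * ((1 - Q ^ 0) * (pochQ Q 0 * pochQ Q (n+1))⁻¹))) = 0 := by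
      simp
    rw [hz, zero_add, eS, Finset.mul_sum]
    refine Finset.sum_congr rfl ?_
    rintro ⟨k, j⟩ hp
    rw [Finset.HasAntidiagonal.mem_antidiagonal] at hp
    have hcan : (1 - Q ^ (k + 1)) * (pochQ Q (k+1) * pochQ Q j)⁻¹ = (pochQ Q k * pochQ Q j)⁻¹ := by
      rw [mul_comm (pochQ Q (k+1)) (pochQ Q j), poch_cancel Q hQ,
        mul_comm (pochQ Q j) (pochQ Q k)]
    have hcc : Q ^ cc (k+1) = Q ^ cc k * Q ^ k := by rw [cc_succ, pow_add]
    have hqq : Q ^ k * Q ^ j = Q ^ n := by rw [← pow_add, hp]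
    rw [hcan]
    rw [pow_succ, hcc]
    linear_combination (-(-1:F)^k * Q ^ cc k * (pochQ Q k)⁻¹ * (pochQ Q j)⁻¹) * hqq
  rw [h1, h2]; ring

lemma eS_eq_zero (Q : F) (hQ : ∀ k : ℕ, 1 - Q ^ (k + 1) ≠ 0) (n : ℕ) (hn : n ≠ 0) :
    eS Q n = 0 := by
  induction n with
  | zero => exact absurd rfl hn
  | succ n ih =>
    have key := eS_key Q hQ n
    have hne : (1 - Q ^ (n + 1)) ≠ 0 := hQ n
    rcases Nat.eq_zero_or_pos n with h0 | hpos
    · subst h0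
      simp only [pow_zero, sub_self, zero_mul] at key
      exact (mul_eq_zero.mp key).resolve_left hne
    · rw [ih hpos.ne', mul_zero] at key
      exact (mul_eq_zero.mp key).resolve_left hne

/-! ### Nonvanishing of monomials in `FF l` -/

variable {l : ℕ}

lemma inj_FF : Function.Injective (algebraMap (MvPolynomial (Fin (l + 1)) ℚ) (FF l)) :=
  IsFractionRing.injective _ _

lemma qv_ne_zero : qv l ≠ 0 := by
  rw [qv, Ne, map_eq_zero_iff _ inj_FF]
  exact MvPolynomial.X_ne_zero 0

lemma zv_ne_zero (i : Fin l) : zv l i ≠ 0 := by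
  rw [zv, Ne, map_eq_zero_iff _ inj_FF]
  exact MvPolynomial.X_ne_zero _

/-- evaluation killing all variables except variable k₀, sending it to X -/
def φ (l : ℕ) (k₀ : Fin (l + 1)) : MvPolynomial (Fin (l + 1)) ℚ →+* Polynomial ℚ :=
  (MvPolynomial.eval₂Hom (Polynomial.C.comp (algebraMap ℚ ℚ))
    (fun k => if k = k₀ then Polynomial.X else 1))

lemma pow_X_eq_one {n : ℕ} (h : (Polynomial.X : Polynomial ℚ) ^ n = 1) : n = 0 := by
  have := congrArg Polynomial.natDegree h
  simpa using this

lemma qpow_ne_one {N : ℕ} (hN : N ≠ 0) : (qv l) ^ N ≠ 1 := by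
  intro h
  rw [qv, ← map_pow, show (1 : FF l) = algebraMap (MvPolynomial (Fin (l+1)) ℚ) (FF l) 1 from (map_one _).symm] at h
  have h2 := inj_FF h
  have h3 := congrArg (φ l (0 : Fin (l+1))) h2
  simp only [map_pow, map_one, φ, MvPolynomial.eval₂Hom_X', if_true, eq_self_iff_true, if_pos] at h3
  exact hN (pow_X_eq_one h3)

lemma phi_prod (m : Fin l → ℕ) (j : Fin l) :
    (φ l (j.succ)) (∏ i, MvPolynomial.X (R := ℚ) (i.succ : Fin (l+1)) ^ m i)
      = Polynomial.X ^ m j := by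
  rw [map_prod]
  have hh : ∀ i : Fin l, (φ l (j.succ)) (MvPolynomial.X (R := ℚ) (i.succ : Fin (l+1)) ^ m i)
      = if i = j then Polynomial.X ^ m j else 1 := by
    intro i
    rw [map_pow]
    simp only [φ, MvPolynomial.eval₂Hom_X']
    by_cases hij : i = j
    · subst hij; simp
    · rw [if_neg (by simpa [Fin.succ_inj] using hij), if_neg hij, one_pow]
  rw [Finset.prod_congr rfl (fun i _ => hh i), Finset.prod_ite_eq' Finset.univ j
    (fun _ => Polynomial.X ^ m j), if_pos (Finset.mem_univ j)]

lemma phi_X0 (j : Fin l) : (φ l (j.succ)) (MvPolynomial.X (R := ℚ) (0 : Fin (l+1))) = 1 := by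
  simp only [φ, MvPolynomial.eval₂Hom_X']
  rw [if_neg (Fin.succ_ne_zero j).symm]

lemma mono_ne_one (m : Fin l → ℕ) (hm : m ≠ 0) (W : ℤ) :
    (∏ i, zv l i ^ m i) * qv l ^ W ≠ 1 := by
  obtain ⟨j, hj⟩ := Function.ne_iff.mp hm
  simp only [Pi.zero_apply] at hj
  intro h
  have hq0 : qv l ≠ 0 := qv_ne_zero
  rcases le_or_gt 0 W with hW | hW
  · obtain ⟨u, rfl⟩ := Int.eq_ofNat_of_zero_le hW
    rw [zpow_natCast] at h
    have h2 : (∏ i, MvPolynomial.X (R := ℚ) (i.succ : Fin (l+1)) ^ m i)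
        * MvPolynomial.X (0 : Fin (l+1)) ^ u = 1 := by
      apply inj_FF
      rw [map_mul, map_prod, map_pow, map_one]
      simpa [qv, zv, map_pow] using h
    have h3 := congrArg (φ l (j.succ)) h2
    rw [map_mul, map_pow, phi_prod, phi_X0, map_one, one_pow, mul_one] at h3
    exact hj (pow_X_eq_one h3)
  · have hWv : W = -((-W).toNat : ℤ) := by omega
    rw [hWv, zpow_neg, zpow_natCast] at h
    rw [mul_inv_eq_one₀ (pow_ne_zero _ hq0)] at h
    have h2 : (∏ i, MvPolynomial.X (R := ℚ) (i.succ : Fin (l+1)) ^ m i)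
        = MvPolynomial.X (0 : Fin (l+1)) ^ (-W).toNat := by
      apply inj_FF
      rw [map_prod, map_pow]
      simpa [qv, zv, map_pow] using h
    have h3 := congrArg (φ l (j.succ)) h2
    rw [map_pow, phi_prod, phi_X0, one_pow] at h3
    exact hj (pow_X_eq_one h3)

/-! ### Interval combinatorics in the pi type -/

lemma Icc_pi_eq (a m : Fin l → ℕ) :
    Finset.Icc a m = Fintype.piFinset (fun i => Finset.Icc (a i) (m i)) := by
  ext c
  simp [Fintype.mem_piFinset, Finset.mem_Icc, Pi.le_def, forall_and]

lemma sum_Iic_Iic {M : Type} [AddCommMonoid M] (m : Fin l → ℕ)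
    (f : (Fin l → ℕ) → (Fin l → ℕ) → M) :
    ∑ c ∈ Finset.Iic m, ∑ a ∈ Finset.Iic c, f c a
      = ∑ a ∈ Finset.Iic m, ∑ c ∈ Finset.Icc a m, f c a := by
  rw [Finset.sum_sigma', Finset.sum_sigma']
  refine Finset.sum_nbij' (fun p => ⟨p.2, p.1⟩) (fun p => ⟨p.2, p.1⟩) ?_ ?_ ?_ ?_ ?_
  · intro p hp
    simp only [Finset.mem_sigma, Finset.mem_Iic, Finset.mem_Icc] at *
    exact ⟨le_trans hp.2 hp.1, hp.2, hp.1⟩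
  · intro p hp
    simp only [Finset.mem_sigma, Finset.mem_Iic, Finset.mem_Icc] at *
    exact ⟨hp.2.2, hp.2.1⟩
  · intro p _; rfl
  · intro p _; rfl
  · intro p _; rfl

/-! ### The inverted recursion (step B) -/

/-- the coefficients of the inverted recursion -/
def Ee (q : F) (d : Fin l → ℕ) (u : Fin l → ℕ) : F :=
  ∏ i, ((-1 : F) ^ u i * (q ^ d i) ^ cc (u i) * (pochQ (q ^ d i) (u i))⁻¹)

lemma Ee_zero (q : F) (d : Fin l → ℕ) : Ee q d 0 = 1 := by
  simp [Ee, cc, pochQ]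

lemma inner1D (Q : F) (hQ : ∀ k : ℕ, 1 - Q ^ (k + 1) ≠ 0) (a M : ℕ) (haM : a ≤ M) :
    ∑ x ∈ Finset.Icc a M,
      ((-1 : F) ^ (M - x) * Q ^ cc (M - x) * (pochQ Q (M - x))⁻¹ * (pochQ Q (x - a))⁻¹)
      = if M - a = 0 then 1 else 0 := by
  have hbij : ∑ x ∈ Finset.Icc a M,
      ((-1 : F) ^ (M - x) * Q ^ cc (M - x) * (pochQ Q (M - x))⁻¹ * (pochQ Q (x - a))⁻¹)
      = eS Q (M - a) := by
    rw [eS]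
    refine Finset.sum_nbij' (fun x => (M - x, x - a)) (fun p => a + p.2) ?_ ?_ ?_ ?_ ?_
    · intro x hx
      rw [Finset.mem_Icc] at hx
      rw [Finset.HasAntidiagonal.mem_antidiagonal]
      omega
    · intro p hp
      rw [Finset.HasAntidiagonal.mem_antidiagonal] at hp
      rw [Finset.mem_Icc]
      omega
    · intro x hx
      rw [Finset.mem_Icc] at hx
      dsimp only
      omega
    · intro p hp
      rw [Finset.HasAntidiagonal.mem_antidiagonal] at hp
      have h1 : M - (a + p.2) = p.1 := by omega
      have h2 : a + p.2 - a = p.2 := by omega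
      simp [h1, h2]
    · intro x hx
      dsimp only
      rw [mul_inv]
      ring
  rw [hbij]
  rcases Nat.eq_zero_or_pos (M - a) with h0 | hpos
  · rw [h0, if_pos rfl, eS_zero]
  · rw [if_neg hpos.ne', eS_eq_zero Q hQ _ hpos.ne']

section stepBsec
variable (B : Matrix (Fin l) (Fin l) ℤ) (d : Fin l → ℕ) (q : F) (z : Fin l → F)

lemma stepB (hQk : ∀ (i : Fin l) (k : ℕ), 1 - (q ^ d i) ^ (k + 1) ≠ 0)
    (J : (Fin l → ℕ) → F) (hJ : IsFerm B d q z J) (m : Fin l → ℕ) :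
    ∑ c ∈ Finset.Iic m, Ee q d (m - c) * J c
      = (∏ i, z i ^ m i) * q ^ (W9 B d m) * J m := by
  have step1 : ∀ c ∈ Finset.Iic m, Ee q d (m - c) * J c
      = ∑ a ∈ Finset.Iic c, Ee q d (m - c) *
          ((∏ i, z i ^ a i) * q ^ (W9 B d a) * (∏ i, pochQ (q ^ d i) (c i - a i))⁻¹ * J a) := by
    intro c _
    rw [hJ.2 c, Finset.mul_sum]
  rw [Finset.sum_congr rfl step1, sum_Iic_Iic]
  have step2 : ∀ a ∈ Finset.Iic m,
      ∑ c ∈ Finset.Icc a m, Ee q d (m - c) *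
          ((∏ i, z i ^ a i) * q ^ (W9 B d a) * (∏ i, pochQ (q ^ d i) (c i - a i))⁻¹ * J a)
      = ((∏ i, z i ^ a i) * q ^ (W9 B d a) * J a) * (if a = m then 1 else 0) := by
    intro a ha
    rw [Finset.mem_Iic] at ha
    have hpull : ∀ c ∈ Finset.Icc a m, Ee q d (m - c) *
          ((∏ i, z i ^ a i) * q ^ (W9 B d a) * (∏ i, pochQ (q ^ d i) (c i - a i))⁻¹ * J a)
        = ((∏ i, z i ^ a i) * q ^ (W9 B d a) * J a) *
            ∏ i, ((-1 : F) ^ (m i - c i) * (q ^ d i) ^ cc (m i - c i)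
              * (pochQ (q ^ d i) (m i - c i))⁻¹ * (pochQ (q ^ d i) (c i - a i))⁻¹) := by
      intro c _
      rw [Ee]
      simp only [Pi.sub_apply, Finset.prod_mul_distrib, Finset.prod_inv_distrib]
      ring
    rw [Finset.sum_congr rfl hpull, ← Finset.mul_sum]
    congr 1
    rw [Icc_pi_eq]
    have hps := Finset.prod_univ_sum (fun i => Finset.Icc (a i) (m i))
      (fun i x => (-1 : F) ^ (m i - x) * (q ^ d i) ^ cc (m i - x)
        * (pochQ (q ^ d i) (m i - x))⁻¹ * (pochQ (q ^ d i) (x - a i))⁻¹)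
    rw [← hps]
    have hinner : ∀ i : Fin l, ∑ x ∈ Finset.Icc (a i) (m i),
        ((-1 : F) ^ (m i - x) * (q ^ d i) ^ cc (m i - x)
          * (pochQ (q ^ d i) (m i - x))⁻¹ * (pochQ (q ^ d i) (x - a i))⁻¹)
        = if m i - a i = 0 then 1 else 0 := fun i =>
      inner1D (q ^ d i) (hQk i) (a i) (m i) (ha i)
    rw [Finset.prod_congr rfl (fun i _ => hinner i)]
    by_cases ham : a = m
    · subst ham; simp
    · rw [if_neg ham]
      obtain ⟨j, hj⟩ := Function.ne_iff.mp ham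
      refine Finset.prod_eq_zero (Finset.mem_univ j) ?_
      have haj : a j ≤ m j := ha j
      rw [if_neg (by omega)]
  rw [Finset.sum_congr rfl step2]
  simp only [mul_ite, mul_one, mul_zero]
  rw [Finset.sum_ite_eq' (Finset.Iic m) m
    (fun a => (∏ i, z i ^ a i) * q ^ (W9 B d a) * J a), if_pos (Finset.mem_Iic.mpr le_rfl)]

end stepBsec

/-! ### The main induction -/

section main
variable (σ : F ≃+* F)

lemma main_aux (B : Matrix (Fin l) (Fin l) ℤ) (d : Fin l → ℕ) (q : F) (z : Fin l → F)
    (hq0 : q ≠ 0) (hz0 : ∀ i, z i ≠ 0)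
    (hQk : ∀ (i : Fin l) (k : ℕ), 1 - (q ^ d i) ^ (k + 1) ≠ 0)
    (hmono : ∀ m : Fin l → ℕ, m ≠ 0 → (∏ i, z i ^ m i) * q ^ (W9 B d m) ≠ 1)
    (J : (Fin l → ℕ) → F) (hJ : IsFerm B d q z J)
    (hq : σ q = q⁻¹) (hz : ∀ i, σ (z i) = (z i)⁻¹) :
    ∀ m : Fin l → ℕ,
      σ (J m) = q ^ ((∑ i, ∑ j, B i j * m i * m j) / 2) * (∏ i, z i ^ m i) * J m := by
  have hσq : ∀ w : ℤ, σ (q ^ w) = q ^ (-w) := by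
    intro w; rw [map_zpow₀, hq, inv_zpow, ← zpow_neg]
  have hσz : ∀ a : Fin l → ℕ, σ (∏ i, z i ^ a i) = (∏ i, z i ^ a i)⁻¹ := by
    intro a
    rw [map_prod, ← Finset.prod_inv_distrib]
    refine Finset.prod_congr rfl fun i _ => ?_
    rw [map_pow, hz, inv_pow]
  have hσpoch : ∀ (i : Fin l) (n : ℕ), σ (pochQ (q ^ d i) n)
      = (-1 : F) ^ n * ((q ^ d i) ^ tt n)⁻¹ * pochQ (q ^ d i) n := by
    intro i n
    have h1 : σ (pochQ (q ^ d i) n) = pochQ (σ (q ^ d i)) n := by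
      rw [pochQ, pochQ, map_prod]
      refine Finset.prod_congr rfl fun k _ => ?_
      rw [map_sub, map_one, map_pow]
    rw [h1, map_pow, hq, inv_pow, pochQ_inv _ (pow_ne_zero _ hq0)]
  have base : σ (J 0) = q ^ ((∑ i, ∑ j, B i j * ((0 : Fin l → ℕ) i : ℤ) * ((0 : Fin l → ℕ) j : ℤ)) / 2)
      * (∏ i, z i ^ (0 : Fin l → ℕ) i) * J 0 := by
    have hS : (∑ i, ∑ j, B i j * ((0 : Fin l → ℕ) i : ℤ) * ((0 : Fin l → ℕ) j : ℤ)) = 0 := by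
      simp
    rw [hJ.1, map_one, hS]
    norm_num
  suffices H : ∀ N : ℕ, ∀ m : Fin l → ℕ, (∑ i, m i) ≤ N →
      σ (J m) = q ^ ((∑ i, ∑ j, B i j * m i * m j) / 2) * (∏ i, z i ^ m i) * J m by
    exact fun m => H (∑ i, m i) m le_rfl
  intro N
  induction N with
  | zero =>
    intro m hm
    have hm0 : m = 0 := by
      funext i
      have h1 : m i ≤ ∑ i, m i :=
        Finset.single_le_sum (fun _ _ => Nat.zero_le _) (Finset.mem_univ i)
      have h2 : (0 : Fin l → ℕ) i = 0 := rfl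
      omega
    subst hm0
    exact base
  | succ N IH =>
    intro m hm
    by_cases hm0 : m = 0
    · subst hm0; exact base
    -- abbreviations (no `set`, to keep things syntactic)
    have hZm0 : (∏ i, z i ^ m i) ≠ 0 :=
      Finset.prod_ne_zero_iff.mpr fun i _ => pow_ne_zero _ (hz0 i)
    have hwm1 : (∏ i, z i ^ m i) * q ^ (W9 B d m) ≠ 1 := hmono m hm0
    -- apply σ to the recursion
    have hσrec : σ (J m) = ∑ a ∈ Finset.Iic m,
        σ ((∏ i, z i ^ a i) * q ^ (W9 B d a) * (∏ i, pochQ (q ^ d i) (m i - a i))⁻¹ * J a) := by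
      conv_lhs => rw [hJ.2 m]
      rw [map_sum]
    -- the term at a = m
    have hTm : σ ((∏ i, z i ^ m i) * q ^ (W9 B d m) * (∏ i, pochQ (q ^ d i) (m i - m i))⁻¹ * J m)
        = (∏ i, z i ^ m i)⁻¹ * q ^ (-(W9 B d m)) * σ (J m) := by
      have h1 : (∏ i, pochQ (q ^ d i) (m i - m i)) = 1 := by
        simp [pochQ]
      rw [map_mul, map_mul, map_mul, h1, inv_one, map_one, mul_one, hσz m, hσq]
    -- the terms at a ≠ m
    have hterm : ∀ a ∈ (Finset.Iic m).erase m,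
        σ ((∏ i, z i ^ a i) * q ^ (W9 B d a) * (∏ i, pochQ (q ^ d i) (m i - a i))⁻¹ * J a)
        = q ^ (∑ i, (d i : ℤ) * m i) * (Ee q d (m - a) * J a) := by
      intro a ha
      have ham : a ≠ m := Finset.ne_of_mem_erase ha
      have haam : a ≤ m := Finset.mem_Iic.mp (Finset.mem_of_mem_erase ha)
      have hai : ∀ i, a i ≤ m i := fun i => haam i
      have hsum : (∑ i, a i) ≤ N := by
        have hlt : (∑ i, a i) < ∑ i, m i := by
          obtain ⟨j, hj⟩ := Function.ne_iff.mp ham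
          exact Finset.sum_lt_sum (fun i _ => hai i)
            ⟨j, Finset.mem_univ j, lt_of_le_of_ne (hai j) hj⟩
        omega
      have hIHa := IH a hsum
      rw [map_mul, map_mul, map_mul, hσz a, hσq (W9 B d a), map_inv₀, map_prod,
        Finset.prod_congr rfl (fun i (_ : i ∈ Finset.univ) => hσpoch i (m i - a i)), hIHa]
      -- now a pure computation
      have hsplit : ∏ i, ((-1 : F) ^ (m i - a i) * ((q ^ d i) ^ tt (m i - a i))⁻¹
            * pochQ (q ^ d i) (m i - a i))
          = (∏ i, (-1 : F) ^ (m i - a i)) * (∏ i, (q ^ d i) ^ tt (m i - a i))⁻¹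
            * (∏ i, pochQ (q ^ d i) (m i - a i)) := by
        rw [Finset.prod_mul_distrib, Finset.prod_mul_distrib, Finset.prod_inv_distrib]
      have hEe : Ee q d (m - a)
          = (∏ i, (-1 : F) ^ (m i - a i)) * (∏ i, (q ^ d i) ^ cc (m i - a i))
            * (∏ i, pochQ (q ^ d i) (m i - a i))⁻¹ := by
        rw [Ee]
        simp only [Pi.sub_apply]
        rw [Finset.prod_mul_distrib, Finset.prod_mul_distrib, Finset.prod_inv_distrib]
      have htt : (∏ i, (q ^ d i) ^ tt (m i - a i))
          = (∏ i, (q ^ d i) ^ cc (m i - a i)) * q ^ (∑ i, d i * (m i - a i)) := by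
        rw [← Finset.prod_pow_eq_pow_sum, ← Finset.prod_mul_distrib]
        refine Finset.prod_congr rfl fun i _ => ?_
        rw [tt_eq, pow_add, pow_mul]
      have hSinv : (∏ i, (-1 : F) ^ (m i - a i))⁻¹ = ∏ i, (-1 : F) ^ (m i - a i) := by
        refine inv_eq_of_mul_eq_one_right ?_
        rw [← Finset.prod_mul_distrib]
        refine Finset.prod_eq_one fun i _ => ?_
        rw [← pow_add, Even.neg_one_pow ⟨m i - a i, rfl⟩]
      have hqpow : q ^ ((∑ i, ∑ j, B i j * a i * a j) / 2) * q ^ (∑ i, d i * (m i - a i))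
          = q ^ (∑ i, (d i : ℤ) * m i) * q ^ (W9 B d a) := by
        rw [← zpow_natCast q (∑ i, d i * (m i - a i)), ← zpow_add₀ hq0, ← zpow_add₀ hq0]
        congr 1
        have hc : ((∑ i, d i * (m i - a i) : ℕ) : ℤ)
            = (∑ i, (d i : ℤ) * m i) - ∑ i, (d i : ℤ) * a i := by
          rw [Nat.cast_sum, ← Finset.sum_sub_distrib]
          refine Finset.sum_congr rfl fun i _ => ?_
          rw [Nat.cast_mul, Nat.cast_sub (hai i)]
          ring
        rw [hc, W9]
        generalize ((∑ i, ∑ j, B i j * (a i : ℤ) * (a j : ℤ)) / 2) = X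
        ring
      have hpochne : (∏ i, pochQ (q ^ d i) (m i - a i)) ≠ 0 :=
        Finset.prod_ne_zero_iff.mpr fun i _ => pochQ_ne_zero _ (hQk i) _
      have hZa0 : (∏ i, z i ^ a i) ≠ 0 :=
        Finset.prod_ne_zero_iff.mpr fun i _ => pow_ne_zero _ (hz0 i)
      have hS0 : (∏ i, (-1 : F) ^ (m i - a i)) ≠ 0 :=
        Finset.prod_ne_zero_iff.mpr fun i _ => pow_ne_zero _ (by norm_num)
      have hqW : (q : F) ^ (W9 B d a) ≠ 0 := zpow_ne_zero _ hq0
      have hS2 : (∏ i, (-1 : F) ^ (m i - a i)) ^ 2 = 1 := by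
        rw [← Finset.prod_pow]
        refine Finset.prod_eq_one fun i _ => ?_
        rw [← pow_mul, mul_comm, pow_mul]
        norm_num
      rw [hsplit, hEe, htt, zpow_neg]
      simp only [mul_inv, inv_inv]
      calc _ = ((∏ i, z i ^ a i)⁻¹ * (∏ i, z i ^ a i)) * ((q ^ (W9 B d a))⁻¹ * (q ^ (W9 B d a))) * (∏ i, (-1 : F) ^ (m i - a i))⁻¹ * (∏ i, (q ^ d i) ^ cc (m i - a i)) * q ^ (∑ i, (d i : ℤ) * m i) * (∏ i, pochQ (q ^ d i) (m i - a i))⁻¹ * J a := by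
            linear_combination ((∏ i, z i ^ a i)⁻¹ * (∏ i, z i ^ a i) * (q ^ (W9 B d a))⁻¹ * (∏ i, (-1 : F) ^ (m i - a i))⁻¹ * (∏ i, (q ^ d i) ^ cc (m i - a i)) * (∏ i, pochQ (q ^ d i) (m i - a i))⁻¹ * J a) * hqpow
        _ = _ := by rw [inv_mul_cancel₀ hZa0, inv_mul_cancel₀ hqW, hSinv]; ring
    -- assemble
    have hqWm : q ^ (W9 B d m) ≠ 0 := zpow_ne_zero _ hq0
    have hsplit_sum : ∑ a ∈ Finset.Iic m,
        σ ((∏ i, z i ^ a i) * q ^ (W9 B d a) * (∏ i, pochQ (q ^ d i) (m i - a i))⁻¹ * J a)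
        = σ ((∏ i, z i ^ m i) * q ^ (W9 B d m) * (∏ i, pochQ (q ^ d i) (m i - m i))⁻¹ * J m)
          + ∑ a ∈ (Finset.Iic m).erase m,
            σ ((∏ i, z i ^ a i) * q ^ (W9 B d a) * (∏ i, pochQ (q ^ d i) (m i - a i))⁻¹ * J a) :=
      (Finset.add_sum_erase _ _ (Finset.mem_Iic.mpr le_rfl)).symm
    have herase : ∑ a ∈ (Finset.Iic m).erase m,
        σ ((∏ i, z i ^ a i) * q ^ (W9 B d a) * (∏ i, pochQ (q ^ d i) (m i - a i))⁻¹ * J a)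
        = q ^ (∑ i, (d i : ℤ) * m i) *
          ((∏ i, z i ^ m i) * q ^ (W9 B d m) * J m - J m) := by
      rw [Finset.sum_congr rfl hterm, ← Finset.mul_sum]
      congr 1
      rw [Finset.sum_erase_eq_sub (Finset.mem_Iic.mpr le_rfl)]
      rw [stepB B d q z hQk J hJ m]
      have hmm : m - m = (0 : Fin l → ℕ) := by funext i; simp
      rw [hmm, Ee_zero, one_mul]
    have heq : σ (J m) = (∏ i, z i ^ m i)⁻¹ * q ^ (-(W9 B d m)) * σ (J m)
        + q ^ (∑ i, (d i : ℤ) * m i) * ((∏ i, z i ^ m i) * q ^ (W9 B d m) * J m - J m) := by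
      conv_lhs => rw [hσrec, hsplit_sum, hTm, herase]
    have hcv : (∏ i, z i ^ m i)⁻¹ * q ^ (-(W9 B d m)) * ((∏ i, z i ^ m i) * q ^ (W9 B d m)) = 1 := by
      rw [zpow_neg]
      field_simp
    have hX : σ (J m) * ((∏ i, z i ^ m i) * q ^ (W9 B d m) - 1)
        = (q ^ (∑ i, (d i : ℤ) * m i) * ((∏ i, z i ^ m i) * q ^ (W9 B d m)) * J m)
          * ((∏ i, z i ^ m i) * q ^ (W9 B d m) - 1) := by
      linear_combination ((∏ i, z i ^ m i) * q ^ (W9 B d m)) * heq + σ (J m) * hcv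
    have hfin : σ (J m)
        = q ^ (∑ i, (d i : ℤ) * m i) * ((∏ i, z i ^ m i) * q ^ (W9 B d m)) * J m :=
      mul_right_cancel₀ (sub_ne_zero.mpr hwm1) hX
    rw [hfin]
    have hqm : q ^ ((∑ i, ∑ j, B i j * m i * m j) / 2)
        = q ^ (∑ i, (d i : ℤ) * m i) * q ^ (W9 B d m) := by
      rw [← zpow_add₀ hq0]
      congr 1
      rw [W9]
      generalize ((∑ i, ∑ j, B i j * (m i : ℤ) * (m j : ℤ)) / 2) = X
      ring
    rw [hqm]
    ring

end main
end S9

theorem stmt_9 (l : ℕ) (hl : 1 ≤ l) (B : Matrix (Fin l) (Fin l) ℤ) (d : Fin l → ℕ)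
    (hsym : B.IsSymm) (hdpos : ∀ i, 0 < d i) (hdiag : ∀ i, B i i = 2 * d i)
    (hoff : ∀ i j, i ≠ j → B i j ≤ 0) (hdvd : ∀ i j, (d i : ℤ) ∣ B i j)
    (hposdef : ∀ x : Fin l → ℤ, x ≠ 0 → 0 < ∑ i, ∑ j, B i j * x i * x j)
    (J : (Fin l → ℕ) → FF l) (hJ : IsFerm B d (qv l) (zv l) J)
    (σ : FF l ≃+* FF l) (hq : σ (qv l) = (qv l)⁻¹)
    (hz : ∀ i, σ (zv l i) = (zv l i)⁻¹) :
    ∀ m : Fin l → ℕ,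
      σ (J m) = qv l ^ ((∑ i, ∑ j, B i j * m i * m j) / 2) *
        (∏ i, zv l i ^ m i) * J m := by
  have hq0 : qv l ≠ 0 := S9.qv_ne_zero
  have hz0 : ∀ i, zv l i ≠ 0 := S9.zv_ne_zero
  have hQk : ∀ (i : Fin l) (k : ℕ), 1 - (qv l ^ d i) ^ (k + 1) ≠ 0 := by
    intro i k
    rw [← pow_mul]
    intro hcon
    have h1 : (qv l) ^ (d i * (k + 1)) = 1 := (sub_eq_zero.mp hcon).symm
    exact S9.qpow_ne_one (Nat.mul_ne_zero (hdpos i).ne' (Nat.succ_ne_zero k)) h1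
  have hmono : ∀ m : Fin l → ℕ, m ≠ 0 → (∏ i, zv l i ^ m i) * qv l ^ (W9 B d m) ≠ 1 :=
    fun m hm => S9.mono_ne_one m hm _
  intro m
  exact S9.main_aux σ B d (qv l) (zv l) hq0 hz0 hQk hmono J hJ hq hz m

end
end

section
/- The family {J_m : m ∈ ℕ^l} is linearly independent over the subfield ℚ(q) of F = ℚ(q, z_1,…,z_l): if a finite ℚ(q)-linear combination ∑_m c_m J_m equals 0, then all coefficients c_m vanish. -/
set_option maxHeartbeats 1000000


/- STATEMENT 10: The family {J_m : m ∈ ℕ^l} is linearly independent over the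
   subfield ℚ(q) of F = ℚ(q, z_1, …, z_l): if a finite ℚ(q)-linear combination
   ∑ c_m J_m vanishes then all the coefficients c_m vanish.  (Since F has
   characteristic 0, the subfield ℚ(q) is the subfield generated by q.) -/

noncomputable section

open scoped BigOperators

/-- The subfield ℚ(q) ⊂ ℚ(q,z_1,…,z_l): the subfield generated by q
(it automatically contains the prime field ℚ). -/
def Qq (l : ℕ) : Subfield (FF l) := Subfield.closure {qv l}

namespace Stmt10Aux

open MvPolynomial

abbrev Av (l : ℕ) := MvPolynomial (Fin (l+1)) ℚ
abbrev Av' (l : ℕ) := MvPolynomial (Fin l) ℚ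
abbrev Fv' (l : ℕ) := FractionRing (Av' l)

def ev (l : ℕ) : Av l →ₐ[ℚ] Av' l := MvPolynomial.aeval (Fin.cases 1 fun i => X i)

abbrev φA (l : ℕ) : Av l →+* FF l := algebraMap (Av l) (FF l)
abbrev φB (l : ℕ) : Av' l →+* Fv' l := algebraMap (Av' l) (Fv' l)

def Good (l : ℕ) (x : FF l) (r : Fv' l) : Prop :=
  ∃ a b : Av l, ev l b ≠ 0 ∧ x * φA l b = φA l a ∧ r * φB l (ev l b) = φB l (ev l a)

variable {l : ℕ}

lemma φA_inj : Function.Injective (φA l) := IsFractionRing.injective _ _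
lemma φB_inj : Function.Injective (φB l) := IsFractionRing.injective _ _

lemma φB_ne_zero {p : Av' l} (h : p ≠ 0) : φB l p ≠ 0 := by
  intro h0; exact h (φB_inj (by simpa using h0))

lemma φA_ne_zero {p : Av l} (h : p ≠ 0) : φA l p ≠ 0 := by
  intro h0; exact h (φA_inj (by simpa using h0))

lemma good_map (a : Av l) : Good l (φA l a) (φB l (ev l a)) :=
  ⟨a, 1, by simp, by simp, by simp⟩

lemma good_one : Good l 1 1 := by simpa using good_map (1 : Av l)

lemma good_zero : Good l 0 0 := by simpa using good_map (0 : Av l)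

lemma good_unique {x : FF l} {r r' : Fv' l} (h : Good l x r) (h' : Good l x r') : r = r' := by
  obtain ⟨a, b, hb, hx, hr⟩ := h
  obtain ⟨a', b', hb', hx', hr'⟩ := h'
  have hA : a * b' = a' * b := by
    apply φA_inj
    rw [map_mul, map_mul, ← hx, ← hx']; ring
  have hE : ev l a * ev l b' = ev l a' * ev l b := by
    rw [← map_mul, hA, map_mul]
  have hE2 : φB l (ev l a) * φB l (ev l b') = φB l (ev l a') * φB l (ev l b) := by
    rw [← map_mul, ← map_mul, ← map_mul, ← map_mul, hA]
  have h2 : r * (φB l (ev l b) * φB l (ev l b')) = r' * (φB l (ev l b) * φB l (ev l b')) := by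
    calc r * (φB l (ev l b) * φB l (ev l b')) = φB l (ev l a) * φB l (ev l b') := by
          rw [← mul_assoc, hr]
      _ = φB l (ev l a') * φB l (ev l b) := hE2
      _ = r' * (φB l (ev l b) * φB l (ev l b')) := by
          rw [← hr']; ring
  exact mul_right_cancel₀ (mul_ne_zero (φB_ne_zero hb) (φB_ne_zero hb')) h2

lemma good_add {x y : FF l} {r s : Fv' l} (h : Good l x r) (h' : Good l y s) :
    Good l (x + y) (r + s) := by
  obtain ⟨a, b, hb, hx, hr⟩ := h
  obtain ⟨a', b', hb', hx', hr'⟩ := h'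
  refine ⟨a * b' + a' * b, b * b', by simp [hb, hb'], ?_, ?_⟩
  · simp only [map_add, map_mul]
    rw [← hx, ← hx']; ring
  · simp only [map_add, map_mul]
    rw [← hr, ← hr']; ring

lemma good_mul {x y : FF l} {r s : Fv' l} (h : Good l x r) (h' : Good l y s) :
    Good l (x * y) (r * s) := by
  obtain ⟨a, b, hb, hx, hr⟩ := h
  obtain ⟨a', b', hb', hx', hr'⟩ := h'
  refine ⟨a * a', b * b', by simp [hb, hb'], ?_, ?_⟩
  · simp only [map_mul]
    rw [← hx, ← hx']; ring
  · simp only [map_mul]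
    rw [← hr, ← hr']; ring

lemma good_inv {x : FF l} {r : Fv' l} (h : Good l x r) (hr : r ≠ 0) :
    Good l x⁻¹ r⁻¹ := by
  obtain ⟨a, b, hb, hx, hrr⟩ := h
  have hea : ev l a ≠ 0 := by
    intro h0
    rw [h0, map_zero, mul_eq_zero] at hrr
    exact hr (hrr.resolve_right (φB_ne_zero hb))
  have hxa : x ≠ 0 := by
    intro h0
    exact φA_ne_zero (p := a) (fun h1 => hea (by rw [h1]; simp))
      (by rw [← hx, h0, zero_mul])
  refine ⟨b, a, hea, ?_, ?_⟩
  · rw [← hx, ← mul_assoc, inv_mul_cancel₀ hxa, one_mul]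
  · rw [← hrr, ← mul_assoc, inv_mul_cancel₀ hr, one_mul]

lemma good_sum {ι : Type*} (s : Finset ι) (f : ι → FF l) (g : ι → Fv' l)
    (h : ∀ i ∈ s, Good l (f i) (g i)) :
    Good l (∑ i ∈ s, f i) (∑ i ∈ s, g i) := by
  classical
  induction s using Finset.induction_on with
  | empty => simpa using (good_zero : Good l 0 0)
  | insert a s hni ih =>
    rw [Finset.sum_insert hni, Finset.sum_insert hni]
    exact good_add (h a (by simp)) (ih fun i hi => h i (by simp [hi]))

lemma good_prod {ι : Type*} (s : Finset ι) (f : ι → FF l) (g : ι → Fv' l)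
    (h : ∀ i ∈ s, Good l (f i) (g i)) :
    Good l (∏ i ∈ s, f i) (∏ i ∈ s, g i) := by
  classical
  induction s using Finset.induction_on with
  | empty => simpa using (good_one : Good l 1 1)
  | insert a s hni ih =>
    rw [Finset.prod_insert hni, Finset.prod_insert hni]
    exact good_mul (h a (by simp)) (ih fun i hi => h i (by simp [hi]))

lemma good_pow {x : FF l} {r : Fv' l} (h : Good l x r) (n : ℕ) : Good l (x ^ n) (r ^ n) := by
  induction n with
  | zero => simpa using (good_one : Good l 1 1)
  | succ n ih => rw [pow_succ, pow_succ]; exact good_mul ih h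

lemma good_neg {x : FF l} {r : Fv' l} (h : Good l x r) : Good l (-x) (-r) := by
  obtain ⟨a, b, hb, hx, hr⟩ := h
  refine ⟨-a, b, hb, ?_, ?_⟩
  · rw [map_neg, ← hx]; ring
  · rw [map_neg, map_neg, ← hr]; ring

lemma good_sub {x y : FF l} {r s : Fv' l} (h : Good l x r) (h' : Good l y s) :
    Good l (x - y) (r - s) := by
  simpa [sub_eq_add_neg] using good_add h (good_neg h')
end Stmt10Aux

namespace Stmt10Aux

open MvPolynomial


variable {l : ℕ}

lemma qv_eq : qv l = φA l (X 0) := rfl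
lemma zv_eq (i : Fin l) : zv l i = φA l (X i.succ) := rfl

lemma ev_X0 : ev l (X 0) = 1 := by simp [ev]
lemma ev_Xsucc (i : Fin l) : ev l (X i.succ) = X i := by simp [ev]

lemma good_q : Good l (qv l) 1 := by
  have := good_map (l := l) (X 0)
  rw [ev_X0, map_one] at this
  exact this

lemma good_z (i : Fin l) : Good l (zv l i) (φB l (X i)) := by
  have := good_map (l := l) (X i.succ)
  rw [ev_Xsucc] at this
  exact this

lemma good_qpow (n : ℕ) : Good l (qv l ^ n) 1 := by
  simpa using good_pow (good_q (l := l)) n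

lemma good_qzpow (n : ℤ) : Good l (qv l ^ n) 1 := by
  cases n with
  | ofNat k => simpa using good_qpow (l := l) k
  | negSucc k =>
      rw [zpow_negSucc]
      simpa using good_inv (good_qpow (l := l) (k + 1)) one_ne_zero

lemma w_ne : (1 : FF l) - qv l ≠ 0 := by
  rw [qv_eq, show (1 : FF l) - φA l (X 0) = φA l (1 - X 0) by rw [map_sub, map_one]]
  apply φA_ne_zero
  intro h
  have := congrArg MvPolynomial.constantCoeff h
  simp at this

lemma good_w : Good l (1 - qv l) 0 := by
  have := good_map (l := l) (1 - X 0)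
  rw [map_sub, map_one, map_sub, map_one, ev_X0, sub_self, map_zero] at this
  rw [qv_eq]
  exact this

/-- the geometric-sum polynomial -/
def sKp (l K : ℕ) : Av l := ∑ j ∈ Finset.range K, X 0 ^ j

lemma one_sub_pow_eq (K : ℕ) : (1 : Av l) - X 0 ^ K = (1 - X 0) * sKp l K := by
  have h := geom_sum_mul (X 0 : Av l) K
  unfold sKp
  linear_combination h

lemma ev_sKp (K : ℕ) : ev l (sKp l K) = (K : Av' l) := by
  unfold sKp
  rw [map_sum]
  simp [ev_X0]

lemma good_poch (dd n : ℕ) (hd : 0 < dd) :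
    Good l ((1 - qv l) ^ n * (pochQ (qv l ^ dd) n)⁻¹)
      ((φB l ((dd ^ n * n.factorial : ℕ) : Av' l))⁻¹) := by
  have hfac : ∀ k : ℕ, (1 : FF l) - (qv l ^ dd) ^ (k + 1)
      = (1 - qv l) * φA l (sKp l (dd * (k + 1))) := by
    intro k
    have h := congrArg (φA l) (one_sub_pow_eq (l := l) (dd * (k + 1)))
    rw [map_sub, map_one, map_pow, map_mul, map_sub, map_one, ← qv_eq] at h
    rw [← pow_mul]; exact h
  have hpoch : pochQ (qv l ^ dd) n
      = (1 - qv l) ^ n * φA l (∏ k ∈ Finset.range n, sKp l (dd * (k + 1))) := by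
    unfold pochQ
    rw [map_prod, Finset.prod_congr rfl (fun k _ => hfac k), Finset.prod_mul_distrib,
      Finset.prod_const, Finset.card_range]
  have hP : ev l (∏ k ∈ Finset.range n, sKp l (dd * (k + 1)))
      = ((dd ^ n * n.factorial : ℕ) : Av' l) := by
    rw [map_prod, Finset.prod_congr rfl (fun k _ => ev_sKp (dd * (k+1))), ← Nat.cast_prod]
    congr 1
    rw [Finset.prod_mul_distrib, Finset.prod_const, Finset.card_range,
      Finset.prod_range_add_one_eq_factorial]
  have hne : φB l ((dd ^ n * n.factorial : ℕ) : Av' l) ≠ 0 := by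
    apply φB_ne_zero
    exact Nat.cast_ne_zero.mpr (by positivity)
  have hgood := good_inv (good_map (l := l) (∏ k ∈ Finset.range n, sKp l (dd * (k + 1))))
    (by rw [hP]; exact hne)
  rw [hP] at hgood
  have hx : (1 - qv l) ^ n * (pochQ (qv l ^ dd) n)⁻¹
      = (φA l (∏ k ∈ Finset.range n, sKp l (dd * (k + 1))))⁻¹ := by
    rw [hpoch, mul_inv, ← mul_assoc, mul_inv_cancel₀ (pow_ne_zero _ w_ne), one_mul]
  rw [hx]
  exact hgood

/-- per-variable residue constant -/
def cN (l dd n : ℕ) : Fv' l := ((dd ^ n * n.factorial : ℕ) : Fv' l)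

instance charZeroFv' : CharZero (Fv' l) :=
  ⟨fun a b h => by
    apply Nat.cast_injective (R := Av' l)
    apply φB_inj
    rwa [map_natCast, map_natCast]⟩

lemma cN_ne (dd n : ℕ) (hd : 0 < dd) : cN l dd n ≠ 0 := by
  unfold cN
  exact Nat.cast_ne_zero.mpr (by positivity)

lemma φB_natCast (k : ℕ) : φB l ((k : ℕ) : Av' l) = (k : Fv' l) :=
  map_natCast (φB l) k

/-- per-variable residue factor of `HH` -/
def HHi (l : ℕ) (dd : ℕ) (i : Fin l) (n : ℕ) : Fv' l :=
  (cN l dd n * (φB l (1 - X i)) ^ n)⁻¹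

lemma one_sub_X_ne (i : Fin l) : φB l (1 - X i) ≠ 0 := by
  apply φB_ne_zero
  intro h
  have := congrArg MvPolynomial.constantCoeff h
  simp at this

lemma Iic_nat_eq_range (M : ℕ) : Finset.Iic M = Finset.range (M + 1) := by
  ext x; simp [Nat.lt_succ_iff]

lemma ident_field {K : Type*} [Field K] [CharZero K] (x y : K) (hxy : x + y = 1) (hy : y ≠ 0)
    (D : K) (hD : D ≠ 0) (M : ℕ) :
    ∑ t ∈ Finset.Iic M,
        x ^ t * (D ^ (M - t) * ((M - t).factorial : K))⁻¹ *
          (D ^ t * (t.factorial : K) * y ^ t)⁻¹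
      = (D ^ M * (M.factorial : K) * y ^ M)⁻¹ := by
  have hterm : ∀ t ∈ Finset.Iic M,
      x ^ t * (D ^ (M - t) * ((M - t).factorial : K))⁻¹ *
          (D ^ t * (t.factorial : K) * y ^ t)⁻¹
        = x ^ t * y ^ (M - t) * ((M.choose t : ℕ) : K) *
            (D ^ M * (M.factorial : K) * y ^ M)⁻¹ := by
    intro t ht
    have htM : t ≤ M := Finset.mem_Iic.mp ht
    have hDM : D ^ M = D ^ t * D ^ (M - t) := by
      rw [← pow_add, Nat.add_sub_cancel' htM]
    have hyM : y ^ M = y ^ t * y ^ (M - t) := by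
      rw [← pow_add, Nat.add_sub_cancel' htM]
    have hfM : (M.factorial : K)
        = ((M.choose t : ℕ) : K) * (t.factorial : K) * ((M - t).factorial : K) := by
      rw [← Nat.cast_mul, ← Nat.cast_mul, Nat.choose_mul_factorial_mul_factorial htM]
    have hch : ((M.choose t : ℕ) : K) ≠ 0 := Nat.cast_ne_zero.mpr (Nat.choose_pos htM).ne'
    have hft : ((t.factorial : ℕ) : K) ≠ 0 := Nat.cast_ne_zero.mpr t.factorial_ne_zero
    have hfMt : (((M - t).factorial : ℕ) : K) ≠ 0 := Nat.cast_ne_zero.mpr (M - t).factorial_ne_zero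
    have hP : (D ^ (M - t) * ((M - t).factorial : K)) ≠ 0 :=
      mul_ne_zero (pow_ne_zero _ hD) hfMt
    have hQ : (D ^ t * (t.factorial : K) * y ^ t) ≠ 0 :=
      mul_ne_zero (mul_ne_zero (pow_ne_zero _ hD) hft) (pow_ne_zero _ hy)
    have hB : D ^ M * (M.factorial : K) * y ^ M
        = (D ^ (M - t) * ((M - t).factorial : K)) * (D ^ t * (t.factorial : K) * y ^ t) *
            ((M.choose t : ℕ) : K) * y ^ (M - t) := by
      rw [hDM, hyM, hfM]; ring
    rw [hB, eq_mul_inv_iff_mul_eq₀ (by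
      exact mul_ne_zero (mul_ne_zero (mul_ne_zero hP hQ) hch) (pow_ne_zero _ hy))]
    calc x ^ t * (D ^ (M - t) * ((M - t).factorial : K))⁻¹ *
          (D ^ t * (t.factorial : K) * y ^ t)⁻¹ *
          ((D ^ (M - t) * ((M - t).factorial : K)) * (D ^ t * (t.factorial : K) * y ^ t) *
            ((M.choose t : ℕ) : K) * y ^ (M - t))
        = x ^ t * y ^ (M - t) * ((M.choose t : ℕ) : K) *
            ((D ^ (M - t) * ((M - t).factorial : K))⁻¹ * (D ^ (M - t) * ((M - t).factorial : K))) *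
            ((D ^ t * (t.factorial : K) * y ^ t)⁻¹ * (D ^ t * (t.factorial : K) * y ^ t)) := by
          ring
      _ = x ^ t * y ^ (M - t) * ((M.choose t : ℕ) : K) := by
          rw [inv_mul_cancel₀ hP, inv_mul_cancel₀ hQ]; ring
  rw [Finset.sum_congr rfl hterm, ← Finset.sum_mul]
  have hbin : ∑ t ∈ Finset.Iic M, x ^ t * y ^ (M - t) * ((M.choose t : ℕ) : K) = 1 := by
    rw [Iic_nat_eq_range, ← add_pow, hxy, one_pow]
  rw [hbin, one_mul]

lemma ident1 (i : Fin l) (dd M : ℕ) (hd : 0 < dd) :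
    ∑ t ∈ Finset.Iic M, (φB l (X i)) ^ t * (cN l dd (M - t))⁻¹ * HHi l dd i t
      = HHi l dd i M := by
  have hy' : φB l ((1 : Av' l) - X i) = 1 - φB l (X i) := by rw [map_sub, map_one]
  have hcN : ∀ n : ℕ, cN l dd n = (dd : Fv' l) ^ n * (n.factorial : Fv' l) := by
    intro n; unfold cN; push_cast; ring
  have hHHi : ∀ n : ℕ, HHi l dd i n
      = ((dd : Fv' l) ^ n * (n.factorial : Fv' l) * (φB l (1 - X i)) ^ n)⁻¹ := by
    intro n; unfold HHi; rw [hcN]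
  have hD : ((dd : ℕ) : Fv' l) ≠ 0 := Nat.cast_ne_zero.mpr hd.ne'
  have hxy : φB l (X i) + φB l (1 - X i) = 1 := by rw [hy']; ring
  calc ∑ t ∈ Finset.Iic M, (φB l (X i)) ^ t * (cN l dd (M - t))⁻¹ * HHi l dd i t
      = ∑ t ∈ Finset.Iic M,
          (φB l (X i)) ^ t * ((dd : Fv' l) ^ (M - t) * ((M - t).factorial : Fv' l))⁻¹ *
            ((dd : Fv' l) ^ t * (t.factorial : Fv' l) * (φB l (1 - X i)) ^ t)⁻¹ := by
        refine Finset.sum_congr rfl fun t _ => ?_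
        rw [hcN, hHHi]
    _ = ((dd : Fv' l) ^ M * (M.factorial : Fv' l) * (φB l (1 - X i)) ^ M)⁻¹ :=
        ident_field _ _ hxy (one_sub_X_ne i) _ hD M
    _ = HHi l dd i M := (hHHi M).symm


def nn {l : ℕ} (m : Fin l → ℕ) : ℕ := ∑ i, m i

lemma pochQ_zero {F : Type} [Field F] (Q : F) : pochQ Q 0 = 1 := by
  unfold pochQ; simp

lemma cN_zero (dd : ℕ) : cN l dd 0 = 1 := by unfold cN; simp

lemma HHi_zero (dd : ℕ) (i : Fin l) : HHi l dd i 0 = 1 := by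
  unfold HHi; rw [cN_zero]; simp

lemma good_ne_zero {x : FF l} {r : Fv' l} (h : Good l x r) (hr : r ≠ 0) : x ≠ 0 := by
  obtain ⟨a, b, hb, hx, hrr⟩ := h
  have hea : ev l a ≠ 0 := by
    intro h0
    rw [h0, map_zero, mul_eq_zero] at hrr
    exact hr (hrr.resolve_right (φB_ne_zero hb))
  intro h0
  exact φA_ne_zero (p := a) (fun h1 => hea (by rw [h1]; simp)) (by rw [← hx, h0, zero_mul])

lemma ident2 (d m : Fin l → ℕ) (hd : ∀ i, 0 < d i) :
    ∑ a ∈ Finset.Iic m,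
        ∏ i, ((φB l (X i)) ^ a i * (cN l (d i) (m i - a i))⁻¹ * HHi l (d i) i (a i))
      = ∏ i, HHi l (d i) i (m i) := by
  have hIic : Finset.Iic m = Fintype.piFinset fun i => Finset.Iic (m i) := by
    ext a
    simp [Fintype.mem_piFinset, Pi.le_def]
  rw [hIic,
    show (∏ i, HHi l (d i) i (m i))
      = ∏ i, ∑ t ∈ Finset.Iic (m i),
          (φB l (X i)) ^ t * (cN l (d i) (m i - t))⁻¹ * HHi l (d i) i t from
      (Finset.prod_congr rfl fun i _ => (ident1 i (d i) (m i) (hd i)).symm)]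
  exact (Finset.prod_univ_sum (fun i => Finset.Iic (m i))
    (fun i t => (φB l (X i)) ^ t * (cN l (d i) (m i - t))⁻¹ * HHi l (d i) i t)).symm

lemma good_main {B : Matrix (Fin l) (Fin l) ℤ} {d : Fin l → ℕ} (hd : ∀ i, 0 < d i)
    {J : (Fin l → ℕ) → FF l} (hJ : IsFerm B d (qv l) (zv l) J) (m : Fin l → ℕ) :
    Good l ((1 - qv l) ^ (nn m) * J m) (∏ i, HHi l (d i) i (m i)) := by
  suffices H : ∀ n : ℕ, ∀ m : Fin l → ℕ, nn m ≤ n →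
      Good l ((1 - qv l) ^ (nn m) * J m) (∏ i, HHi l (d i) i (m i)) from H (nn m) m le_rfl
  intro n
  induction n with
  | zero =>
      intro m hm
      have hm0 : m = 0 := by
        funext i
        have := Finset.sum_eq_zero_iff.mp (Nat.le_zero.mp hm) i (Finset.mem_univ i)
        simpa using this
      subst hm0
      have hnn : nn (0 : Fin l → ℕ) = 0 := by unfold nn; simp
      rw [hnn, hJ.1]
      have : ∏ i, HHi l (d i) i ((0 : Fin l → ℕ) i) = 1 := by
        simp [HHi_zero]
      rw [this, pow_zero, mul_one]
      exact good_one
  | succ n ih =>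
      intro m hm
      by_cases hm0 : m = 0
      · subst hm0
        have hnn : nn (0 : Fin l → ℕ) = 0 := by unfold nn; simp
        rw [hnn, hJ.1]
        have : ∏ i, HHi l (d i) i ((0 : Fin l → ℕ) i) = 1 := by
          simp [HHi_zero]
        rw [this, pow_zero, mul_one]
        exact good_one
      · -- the inductive step
        set f : (Fin l → ℕ) → FF l := fun a =>
          (∏ i, zv l i ^ a i) * qv l ^ (W9 B d a) *
            (∏ i, pochQ (qv l ^ d i) (m i - a i))⁻¹ * J a with hf
        set res : (Fin l → ℕ) → Fv' l := fun a =>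
          ∏ i, ((φB l (X i)) ^ a i * (cN l (d i) (m i - a i))⁻¹ * HHi l (d i) i (a i)) with hres
        have hmem : m ∈ Finset.Iic m := Finset.mem_Iic.mpr le_rfl
        have hrec : J m = ∑ a ∈ Finset.Iic m, f a := hJ.2 m
        have hsplit := Finset.sum_erase_add (Finset.Iic m) f hmem
        set Z : FF l := (∏ i, zv l i ^ m i) * qv l ^ (W9 B d m) with hZ
        have hTm : f m = Z * J m := by
          simp only [hf, hZ]
          simp [pochQ_zero]
        set u : FF l := 1 - Z with hu
        have hum : u * J m = ∑ a ∈ (Finset.Iic m).erase m, f a := by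
          have h1 : (∑ a ∈ (Finset.Iic m).erase m, f a) + Z * J m = J m := by
            rw [← hTm, hsplit, ← hrec]
          rw [hu]
          linear_combination -h1
        have hfin : ∀ a ∈ (Finset.Iic m).erase m,
            Good l ((1 - qv l) ^ nn m * f a) (res a) := by
          intro a ha
          obtain ⟨hane, haIic⟩ := Finset.mem_erase.mp ha
          have hale : a ≤ m := Finset.mem_Iic.mp haIic
          have hlt : nn a < nn m := by
            apply Finset.sum_lt_sum (fun i _ => hale i)
            obtain ⟨i, hi⟩ := Function.ne_iff.mp hane
            exact ⟨i, Finset.mem_univ i, lt_of_le_of_ne (hale i) hi⟩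
          have hle' : nn a ≤ nn m := hlt.le
          have hpow : (1 - qv l) ^ nn m = (1 - qv l) ^ (nn m - nn a) * (1 - qv l) ^ nn a :=
            (pow_sub_mul_pow _ hle').symm
          have hx : (1 - qv l) ^ nn m * f a
              = (∏ i, zv l i ^ a i) * qv l ^ (W9 B d a) *
                ((1 - qv l) ^ (nn m - nn a) * (∏ i, pochQ (qv l ^ d i) (m i - a i))⁻¹) *
                ((1 - qv l) ^ nn a * J a) := by
            simp only [hf]
            rw [hpow]; ring
          rw [hx]
          have g1 : Good l (∏ i, zv l i ^ a i) (∏ i, (φB l (X i)) ^ a i) :=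
            good_prod _ _ _ (fun i _ => good_pow (good_z i) (a i))
          have g2 : Good l (qv l ^ (W9 B d a)) 1 := good_qzpow _
          have g3 : Good l
              ((1 - qv l) ^ (nn m - nn a) * (∏ i, pochQ (qv l ^ d i) (m i - a i))⁻¹)
              (∏ i, (cN l (d i) (m i - a i))⁻¹) := by
            have hsub : nn m - nn a = ∑ i, (m i - a i) := by
              unfold nn
              rw [Finset.sum_tsub_distrib _ (fun i _ => hale i)]
            have hsplit2 : (1 - qv l) ^ (nn m - nn a) *
                (∏ i, pochQ (qv l ^ d i) (m i - a i))⁻¹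
                = ∏ i, ((1 - qv l) ^ (m i - a i) * (pochQ (qv l ^ d i) (m i - a i))⁻¹) := by
              rw [Finset.prod_mul_distrib, Finset.prod_pow_eq_pow_sum,
                Finset.prod_inv_distrib, hsub]
            rw [hsplit2]
            apply good_prod
            intro i _
            have hgp := good_poch (l := l) (d i) (m i - a i) (hd i)
            rw [show (φB l ((d i ^ (m i - a i) * (m i - a i).factorial : ℕ) : Av' l))
                = cN l (d i) (m i - a i) from by unfold cN; exact map_natCast _ _] at hgp
            exact hgp
          have g4 : Good l ((1 - qv l) ^ nn a * J a) (∏ i, HHi l (d i) i (a i)) :=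
            ih a (by omega)
          have hg := good_mul (good_mul (good_mul g1 g2) g3) g4
          have hres2 : (∏ i, (φB l (X i)) ^ a i) * 1 * (∏ i, (cN l (d i) (m i - a i))⁻¹) *
              (∏ i, HHi l (d i) i (a i)) = res a := by
            rw [hres, mul_one, ← Finset.prod_mul_distrib, ← Finset.prod_mul_distrib]
          rw [← hres2]
          exact hg
        have hsum : Good l ((1 - qv l) ^ nn m * (u * J m))
            (∑ a ∈ (Finset.Iic m).erase m, res a) := by
          rw [hum, Finset.mul_sum]
          exact good_sum _ _ _ hfin
        set ZMp : Av' l := ∏ i, X i ^ m i with hZMp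
        have gZ : Good l Z (φB l ZMp) := by
          have g1 : Good l (∏ i, zv l i ^ m i) (∏ i, (φB l (X i)) ^ m i) :=
            good_prod _ _ _ (fun i _ => good_pow (good_z i) (m i))
          have hg := good_mul g1 (good_qzpow (W9 B d m))
          rw [mul_one] at hg
          have : φB l ZMp = ∏ i, (φB l (X i)) ^ m i := by
            rw [hZMp, map_prod]
            exact Finset.prod_congr rfl fun i _ => map_pow _ _ _
          rw [this]
          exact hg
        have gu : Good l u (1 - φB l ZMp) := good_sub good_one gZ
        have hrune : (1 : Fv' l) - φB l ZMp ≠ 0 := by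
          rw [show (1 : Fv' l) - φB l ZMp = φB l (1 - ZMp) from by rw [map_sub, map_one]]
          apply φB_ne_zero
          intro h
          obtain ⟨i, hi⟩ := Function.ne_iff.mp hm0
          have hcc : MvPolynomial.constantCoeff ((1 : Av' l) - ZMp) = 1 := by
            rw [map_sub, map_one, hZMp, map_prod]
            have : ∏ i, MvPolynomial.constantCoeff ((X i : Av' l) ^ m i) = 0 :=
              Finset.prod_eq_zero (Finset.mem_univ i)
                (by rw [map_pow, MvPolynomial.constantCoeff_X, zero_pow (by simpa using hi)])
            rw [this, sub_zero]
          rw [h, map_zero] at hcc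
          exact one_ne_zero hcc.symm
        have hune : u ≠ 0 := good_ne_zero gu hrune
        have guinv : Good l u⁻¹ ((1 - φB l ZMp)⁻¹) := good_inv gu hrune
        have hfinal := good_mul guinv hsum
        have hxeq : u⁻¹ * ((1 - qv l) ^ nn m * (u * J m)) = (1 - qv l) ^ nn m * J m := by
          field_simp
        rw [hxeq] at hfinal
        have hressum : (1 - φB l ZMp)⁻¹ * (∑ a ∈ (Finset.Iic m).erase m, res a)
            = ∏ i, HHi l (d i) i (m i) := by
          have h2 : ∑ a ∈ Finset.Iic m, res a = ∏ i, HHi l (d i) i (m i) := ident2 d m hd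
          have hsp := Finset.sum_erase_add (Finset.Iic m) res hmem
          have hresm : res m = φB l ZMp * ∏ i, HHi l (d i) i (m i) := by
            rw [hres, hZMp, map_prod]
            rw [← Finset.prod_mul_distrib]
            refine Finset.prod_congr rfl fun i _ => ?_
            rw [Nat.sub_self, cN_zero, inv_one, mul_one, map_pow]
          have hsum2 : ∑ a ∈ (Finset.Iic m).erase m, res a
              = (1 - φB l ZMp) * ∏ i, HHi l (d i) i (m i) := by
            have : ∑ a ∈ (Finset.Iic m).erase m, res a = (∑ a ∈ Finset.Iic m, res a) - res m := by
              rw [← hsp]; ring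
            rw [this, h2, hresm]; ring
          rw [hsum2, ← mul_assoc, inv_mul_cancel₀ hrune, one_mul]
        rw [hressum] at hfinal
        exact hfinal

/-- embedding of `ℚ[X]` into `Av l` via `X ↦ X 0` -/
def toAv (l : ℕ) : Polynomial ℚ →ₐ[ℚ] Av l := Polynomial.aeval (X 0)

lemma toAv_inj : Function.Injective (toAv l) := by
  set ψ : Av l →ₐ[ℚ] Polynomial ℚ :=
    MvPolynomial.aeval (fun j => if j = 0 then Polynomial.X else 1) with hψ
  have hcomp : ∀ P : Polynomial ℚ, ψ (toAv l P) = P := by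
    intro P
    rw [toAv, ← Polynomial.aeval_algHom_apply]
    simp [hψ]
  intro P Q h
  have := congrArg ψ h
  rwa [hcomp, hcomp] at this

lemma toAv_ne_zero {P : Polynomial ℚ} (h : P ≠ 0) : toAv l P ≠ 0 := by
  intro h0
  exact h (toAv_inj (by rw [h0, map_zero]))

lemma ev_toAv (P : Polynomial ℚ) :
    ev l (toAv l P) = MvPolynomial.C (Polynomial.eval 1 P) := by
  have h := Polynomial.aeval_algHom_apply (ev l) (X 0 : Av l) P
  rw [ev_X0] at h
  rw [toAv, ← h]
  have h1 : (1 : Av' l) = algebraMap ℚ (Av' l) 1 := by simp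
  rw [h1, Polynomial.aeval_algebraMap_apply_eq_algebraMap_eval]
  rfl

lemma good_polyQ (P : Polynomial ℚ) :
    Good l (φA l (toAv l P)) (φB l (MvPolynomial.C (Polynomial.eval 1 P))) := by
  have := good_map (l := l) (toAv l P)
  rwa [ev_toAv] at this

lemma toAv_X_sub_one : toAv l (Polynomial.X - Polynomial.C 1) = X 0 - 1 := by
  rw [toAv]
  simp

/-- the subfield of `FF l` of rational functions of `q` alone -/
def QqB (l : ℕ) : Subfield (FF l) where
  carrier := {x | ∃ fp gp : Polynomial ℚ, gp ≠ 0 ∧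
    x * φA l (toAv l gp) = φA l (toAv l fp)}
  zero_mem' := ⟨0, 1, one_ne_zero, by simp⟩
  one_mem' := ⟨1, 1, one_ne_zero, by simp⟩
  add_mem' := by
    rintro x y ⟨f1, g1, h1, e1⟩ ⟨f2, g2, h2, e2⟩
    refine ⟨f1 * g2 + f2 * g1, g1 * g2, mul_ne_zero h1 h2, ?_⟩
    simp only [map_add, map_mul]
    rw [← e1, ← e2]; ring
  neg_mem' := by
    rintro x ⟨f1, g1, h1, e1⟩
    refine ⟨-f1, g1, h1, ?_⟩
    simp only [map_neg]
    rw [← e1]; ring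
  mul_mem' := by
    rintro x y ⟨f1, g1, h1, e1⟩ ⟨f2, g2, h2, e2⟩
    refine ⟨f1 * f2, g1 * g2, mul_ne_zero h1 h2, ?_⟩
    simp only [map_mul]
    rw [← e1, ← e2]; ring
  inv_mem' := by
    rintro x ⟨f1, g1, h1, e1⟩
    by_cases hx : x = 0
    · exact ⟨0, 1, one_ne_zero, by simp [hx]⟩
    · have hg1 : φA l (toAv l g1) ≠ 0 := φA_ne_zero (toAv_ne_zero h1)
      have hf1F : φA l (toAv l f1) ≠ 0 := by
        rw [← e1]
        exact mul_ne_zero hx hg1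
      have hf1 : f1 ≠ 0 := by
        intro h0
        apply hf1F
        rw [h0]; simp
      refine ⟨g1, f1, hf1, ?_⟩
      rw [← e1, ← mul_assoc, inv_mul_cancel₀ hx, one_mul]

lemma Qq_le_QqB : Qq l ≤ QqB l := by
  apply Subfield.closure_le.mpr
  rw [Set.singleton_subset_iff]
  refine ⟨Polynomial.X, 1, one_ne_zero, ?_⟩
  simp [toAv, qv_eq]

lemma prod_X_pow_univ (e : Fin l → ℕ) :
    (∏ i, (X i : Av' l) ^ e i)
      = MvPolynomial.monomial (Finsupp.equivFunOnFinite.symm e) 1 := by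
  rw [← MvPolynomial.prod_X_pow_eq_monomial]
  apply (Finset.prod_subset (Finset.subset_univ _) _).symm
  intro i _ hns
  have he : e i = 0 := by
    by_contra hne
    exact hns (Finsupp.mem_support_iff.mpr (by simpa using hne))
  rw [he, pow_zero]


end Stmt10Aux

open Stmt10Aux MvPolynomial

theorem stmt_10 (l : ℕ) (hl : 1 ≤ l) (B : Matrix (Fin l) (Fin l) ℤ) (d : Fin l → ℕ)
    (hsym : B.IsSymm) (hdpos : ∀ i, 0 < d i) (hdiag : ∀ i, B i i = 2 * d i)
    (hoff : ∀ i j, i ≠ j → B i j ≤ 0) (hdvd : ∀ i j, (d i : ℤ) ∣ B i j)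
    (hposdef : ∀ x : Fin l → ℤ, x ≠ 0 → 0 < ∑ i, ∑ j, B i j * x i * x j)
    (J : (Fin l → ℕ) → FF l) (hJ : IsFerm B d (qv l) (zv l) J)
    (S : Finset (Fin l → ℕ)) (c : (Fin l → ℕ) → FF l)
    (hc : ∀ m ∈ S, c m ∈ Qq l)
    (hsum : ∑ m ∈ S, c m * J m = 0) :
    ∀ m ∈ S, c m = 0 := by
  classical
  by_contra hcon
  push_neg at hcon
  obtain ⟨m₀, hm₀S, hm₀⟩ := hcon
  set S' := S.filter (fun m => c m ≠ 0) with hS'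
  have hS'sub : ∀ m ∈ S', m ∈ S ∧ c m ≠ 0 := fun m hm => Finset.mem_filter.mp hm
  have hS'ne : S'.Nonempty := ⟨m₀, Finset.mem_filter.mpr ⟨hm₀S, hm₀⟩⟩
  have hrel : ∑ m ∈ S', c m * J m = 0 := by
    rw [hS']
    refine (Finset.sum_filter_of_ne ?_).trans hsum
    intro x hx hne hc0
    exact hne (by rw [hc0, zero_mul])
  -- polynomial representations of the coefficients
  have hpoly : ∀ m : Fin l → ℕ, ∃ fgp : Polynomial ℚ × Polynomial ℚ, m ∈ S' →
      fgp.2 ≠ 0 ∧ c m * φA l (toAv l fgp.2) = φA l (toAv l fgp.1) := by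
    intro m
    by_cases hm : m ∈ S'
    · obtain ⟨f, g, hg, he⟩ := Qq_le_QqB (hc m (hS'sub m hm).1)
      exact ⟨(f, g), fun _ => ⟨hg, he⟩⟩
    · exact ⟨(0, 0), fun h => absurd h hm⟩
  choose fg hfg using hpoly
  set Fm : (Fin l → ℕ) → Polynomial ℚ :=
    fun m => (fg m).1 * ∏ m' ∈ S'.erase m, (fg m').2 with hFmdef
  have hFmne : ∀ m ∈ S', Fm m ≠ 0 := by
    intro m hm
    obtain ⟨hg2, heq⟩ := hfg m hm
    have hcm : c m ≠ 0 := (hS'sub m hm).2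
    have hf1 : (fg m).1 ≠ 0 := by
      intro h0
      have h1 : φA l (toAv l (fg m).1) = 0 := by rw [h0, map_zero, map_zero]
      rw [← heq] at h1
      exact (mul_ne_zero hcm (φA_ne_zero (toAv_ne_zero hg2))) h1
    simp only [hFmdef]
    refine mul_ne_zero hf1 (Finset.prod_ne_zero_iff.mpr ?_)
    intro m' hm'
    exact (hfg m' (Finset.mem_of_mem_erase hm')).1
  -- the cleared relation
  have hrel2 : ∑ m ∈ S', φA l (toAv l (Fm m)) * J m = 0 := by
    have h0 : (∑ m ∈ S', c m * J m) * φA l (toAv l (∏ m' ∈ S', (fg m').2)) = 0 := by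
      rw [hrel, zero_mul]
    rw [Finset.sum_mul] at h0
    rw [← h0]
    refine Finset.sum_congr rfl fun m hm => ?_
    obtain ⟨hg2, heq⟩ := hfg m hm
    have hsplitGP : (∏ m' ∈ S', (fg m').2) = (fg m).2 * ∏ m' ∈ S'.erase m, (fg m').2 :=
      (Finset.mul_prod_erase S' (fun m' => (fg m').2) hm).symm
    simp only [hFmdef]
    rw [hsplitGP, map_mul, map_mul, map_mul, map_mul, ← heq]
    ring
  -- root multiplicities at q = 1
  set α : (Fin l → ℕ) → ℕ := fun m => (Fm m).rootMultiplicity 1 with hα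
  set Rm : (Fin l → ℕ) → Polynomial ℚ :=
    fun m => (Fm m) /ₘ (Polynomial.X - Polynomial.C 1) ^ (α m) with hRmdef
  have hdecomp : ∀ m, (Polynomial.X - Polynomial.C 1) ^ (α m) * Rm m = Fm m := fun m =>
    Polynomial.pow_mul_divByMonic_rootMultiplicity_eq _ 1
  have hRne : ∀ m ∈ S', (Rm m).eval 1 ≠ 0 := fun m hm =>
    Polynomial.eval_divByMonic_pow_rootMultiplicity_ne_zero 1 (hFmne m hm)
  -- normalization exponents
  set nnt : (Fin l → ℕ) → ℤ := fun m => (α m : ℤ) - (nn m : ℤ) with hnnt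
  have himg : (S'.image nnt).Nonempty := hS'ne.image _
  set t : ℤ := (S'.image nnt).min' himg with ht
  have ht_le : ∀ m ∈ S', t ≤ nnt m := fun m hm =>
    Finset.min'_le _ _ (Finset.mem_image_of_mem _ hm)
  obtain ⟨m₁, hm₁, hm₁t⟩ := Finset.mem_image.mp (Finset.min'_mem (S'.image nnt) himg)
  set k : (Fin l → ℕ) → ℕ := fun m => (nnt m - t).toNat with hkdef
  have hkm : ∀ m ∈ S', (-t) + (α m : ℤ) = ((k m + nn m : ℕ) : ℤ) := by
    intro m hm
    have h1 := ht_le m hm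
    simp only [hkdef, hnnt] at h1 ⊢
    push_cast
    omega
  have hk₁ : k m₁ = 0 := by
    simp only [hkdef]
    rw [hm₁t]
    simp [ht]
  -- multiply the relation by (1-q)^(-t) and take residues
  have h3 : ∑ m ∈ S', (1 - qv l) ^ (-t : ℤ) * (φA l (toAv l (Fm m)) * J m) = 0 := by
    rw [← Finset.mul_sum, hrel2, mul_zero]
  have hterm : ∀ m ∈ S',
      (1 - qv l) ^ (-t : ℤ) * (φA l (toAv l (Fm m)) * J m)
        = ((1 - qv l) ^ (k m) * ((-1 : FF l) ^ (α m) * φA l (toAv l (Rm m)))) *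
            ((1 - qv l) ^ (nn m) * J m) := by
    intro m hm
    have hφF : φA l (toAv l (Fm m))
        = (-1 : FF l) ^ (α m) * (1 - qv l) ^ (α m) * φA l (toAv l (Rm m)) := by
      rw [← hdecomp m, map_mul, map_mul, map_pow, map_pow, toAv_X_sub_one]
      have hsub : φA l ((X 0 : Av l) - 1) = -(1 - qv l) := by
        rw [map_sub, map_one, ← qv_eq]; ring
      rw [hsub, neg_pow]
    have hzp : (1 - qv l) ^ (-t : ℤ) * (1 - qv l) ^ (α m)
        = (1 - qv l) ^ (k m) * (1 - qv l) ^ (nn m) := by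
      rw [← pow_add, ← zpow_natCast (1 - qv l) (α m), ← zpow_add₀ w_ne,
        ← zpow_natCast (1 - qv l) (k m + nn m), hkm m hm]
    calc (1 - qv l) ^ (-t : ℤ) * (φA l (toAv l (Fm m)) * J m)
        = ((1 - qv l) ^ (-t : ℤ) * (1 - qv l) ^ (α m)) *
            ((-1 : FF l) ^ (α m) * φA l (toAv l (Rm m))) * J m := by
          rw [hφF]; ring
      _ = _ := by rw [hzp]; ring
  have h5 : (0 : FF l) = ∑ m ∈ S',
      ((1 - qv l) ^ (k m) * ((-1 : FF l) ^ (α m) * φA l (toAv l (Rm m)))) *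
        ((1 - qv l) ^ (nn m) * J m) := by
    rw [← Finset.sum_congr rfl hterm, h3]
  have hgood : Good l (0 : FF l) (∑ m ∈ S',
      ((0 : Fv' l) ^ (k m) * ((-1 : Fv' l) ^ (α m) * φB l (C ((Rm m).eval 1)))) *
        (∏ i, HHi l (d i) i (m i))) := by
    rw [h5]
    apply good_sum
    intro m hm
    exact good_mul
      (good_mul (good_pow good_w (k m))
        (good_mul (good_pow (good_neg good_one) (α m)) (good_polyQ (Rm m))))
      (good_main hdpos hJ m)
  have hσsum : ∑ m ∈ S',
      ((0 : Fv' l) ^ (k m) * ((-1 : Fv' l) ^ (α m) * φB l (C ((Rm m).eval 1)))) *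
        (∏ i, HHi l (d i) i (m i)) = 0 := good_unique hgood good_zero
  -- restrict to the set where k = 0
  set T := S'.filter (fun m => k m = 0) with hT
  have hTsum : ∑ m ∈ T, ((-1 : Fv' l) ^ (α m) * φB l (C ((Rm m).eval 1))) *
      (∏ i, HHi l (d i) i (m i)) = 0 := by
    have heq : ∑ m ∈ T, ((-1 : Fv' l) ^ (α m) * φB l (C ((Rm m).eval 1))) *
        (∏ i, HHi l (d i) i (m i))
        = ∑ m ∈ S', ((0 : Fv' l) ^ (k m) * ((-1 : Fv' l) ^ (α m) *
            φB l (C ((Rm m).eval 1)))) * (∏ i, HHi l (d i) i (m i)) := by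
      rw [hT, Finset.sum_filter]
      refine Finset.sum_congr rfl fun m hm => ?_
      by_cases h0 : k m = 0
      · rw [if_pos h0, h0, pow_zero, one_mul]
      · rw [if_neg h0, zero_pow h0, zero_mul, zero_mul]
    rw [heq, hσsum]
  have hm₁T : m₁ ∈ T := Finset.mem_filter.mpr ⟨hm₁, hk₁⟩
  have hTne : T.Nonempty := ⟨m₁, hm₁T⟩
  -- pass to the polynomial level
  set N : ℕ := T.sup nn with hN
  have hmiN : ∀ m ∈ T, ∀ i, m i ≤ N := by
    intro m hm i
    calc m i ≤ nn m := Finset.single_le_sum (f := fun j => m j)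
          (fun _ _ => Nat.zero_le _) (Finset.mem_univ i)
      _ ≤ N := Finset.le_sup hm
  set ncon : (Fin l → ℕ) → ℕ := fun m => ∏ i, (d i) ^ (m i) * (m i).factorial with hncon
  have hncon_pos : ∀ m, 0 < ncon m := by
    intro m
    simp only [hncon]
    apply Finset.prod_pos
    intro i _
    exact Nat.mul_pos (pow_pos (hdpos i) _) (m i).factorial_pos
  have hHH : ∀ m : Fin l → ℕ, (∏ i, HHi l (d i) i (m i))
      = (((ncon m : ℕ) : Fv' l) * φB l (∏ i, ((1 : Av' l) - X i) ^ (m i)))⁻¹ := by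
    intro m
    unfold HHi
    rw [Finset.prod_inv_distrib]
    congr 1
    rw [Finset.prod_mul_distrib, map_prod]
    congr 1
    · unfold cN
      rw [← Nat.cast_prod]
    · exact Finset.prod_congr rfl fun i _ => (map_pow _ _ _).symm
  have hsplitD : ∀ m ∈ T, (∏ i, ((1 : Av' l) - X i) ^ N)
      = (∏ i, ((1 : Av' l) - X i) ^ (m i)) * ∏ i, ((1 : Av' l) - X i) ^ (N - m i) := by
    intro m hm
    rw [← Finset.prod_mul_distrib]
    exact Finset.prod_congr rfl fun i _ => (pow_mul_pow_sub _ (hmiN m hm i)).symm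
  have hDne : ∀ m : Fin l → ℕ, φB l (∏ i, ((1 : Av' l) - X i) ^ (m i)) ≠ 0 := by
    intro m
    rw [map_prod]
    apply Finset.prod_ne_zero_iff.mpr
    intro i _
    rw [map_pow]
    exact pow_ne_zero _ (one_sub_X_ne i)
  set ρ : (Fin l → ℕ) → ℚ := fun m => (-1 : ℚ) ^ (α m) * (Rm m).eval 1 / (ncon m : ℚ) with hρdef
  have hρne : ∀ m ∈ T, ρ m ≠ 0 := by
    intro m hm
    have hmS' : m ∈ S' := (Finset.mem_filter.mp hm).1
    simp only [hρdef]
    apply div_ne_zero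
    · exact mul_ne_zero (pow_ne_zero _ (neg_ne_zero.mpr one_ne_zero)) (hRne m hmS')
    · exact Nat.cast_ne_zero.mpr (hncon_pos m).ne'
  have hγ : ∀ m ∈ T,
      (((-1 : Fv' l) ^ (α m) * φB l (C ((Rm m).eval 1))) * (∏ i, HHi l (d i) i (m i))) *
          φB l (∏ i, ((1 : Av' l) - X i) ^ N)
        = φB l (C (ρ m) * ∏ i, ((1 : Av' l) - X i) ^ (N - m i)) := by
    intro m hm
    have hcast : φB l (C ((ncon m : ℕ) : ℚ)) = ((ncon m : ℕ) : Fv' l) := by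
      rw [map_natCast (C : ℚ →+* Av' l), φB_natCast]
    have h1 : ρ m * ((ncon m : ℕ) : ℚ) = (-1 : ℚ) ^ (α m) * (Rm m).eval 1 := by
      simp only [hρdef]
      exact div_mul_cancel₀ _ (Nat.cast_ne_zero.mpr (hncon_pos m).ne')
    have hkey : φB l (C (ρ m)) * ((ncon m : ℕ) : Fv' l)
        = (-1 : Fv' l) ^ (α m) * φB l (C ((Rm m).eval 1)) := by
      have e1 : (C (ρ m) * C ((ncon m : ℕ) : ℚ) : Av' l)
          = C ((-1 : ℚ) ^ (α m) * (Rm m).eval 1) := by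
        rw [← map_mul, h1]
      have e2 : (C ((-1 : ℚ) ^ (α m) * (Rm m).eval 1) : Av' l)
          = (-1 : Av' l) ^ (α m) * C ((Rm m).eval 1) := by
        rw [map_mul (C : ℚ →+* Av' l), map_pow (C : ℚ →+* Av' l),
          map_neg (C : ℚ →+* Av' l), map_one (C : ℚ →+* Av' l)]
      calc φB l (C (ρ m)) * ((ncon m : ℕ) : Fv' l)
          = φB l (C (ρ m)) * φB l (C ((ncon m : ℕ) : ℚ)) := by rw [hcast]
        _ = φB l (C (ρ m) * C ((ncon m : ℕ) : ℚ)) := by rw [map_mul (φB l)]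
        _ = φB l ((-1 : Av' l) ^ (α m) * C ((Rm m).eval 1)) := by rw [e1, e2]
        _ = (-1 : Fv' l) ^ (α m) * φB l (C ((Rm m).eval 1)) := by
            rw [map_mul (φB l), map_pow (φB l), map_neg (φB l), map_one (φB l)]
    have hnn0 : ((ncon m : ℕ) : Fv' l) ≠ 0 := Nat.cast_ne_zero.mpr (hncon_pos m).ne'
    rw [hHH m, hsplitD m hm, map_mul (φB l), map_mul (φB l), ← hkey]
    have hX : ∀ a b c e : Fv' l, b ≠ 0 → c ≠ 0 →
        (a * b) * (b * c)⁻¹ * (c * e) = a * e := by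
      intro a b c e hb hc
      field_simp
    exact hX _ _ _ _ hnn0 (hDne m)
  have hT2 : ∑ m ∈ T, φB l (C (ρ m) * ∏ i, ((1 : Av' l) - X i) ^ (N - m i)) = 0 := by
    have h6 : (∑ m ∈ T, ((-1 : Fv' l) ^ (α m) * φB l (C ((Rm m).eval 1))) *
        (∏ i, HHi l (d i) i (m i))) * φB l (∏ i, ((1 : Av' l) - X i) ^ N) = 0 := by
      rw [hTsum, zero_mul]
    rw [Finset.sum_mul] at h6
    rw [← h6]
    exact Finset.sum_congr rfl fun m hm => (hγ m hm).symm
  have hAv : ∑ m ∈ T, (C (ρ m) * ∏ i, ((1 : Av' l) - X i) ^ (N - m i)) = 0 := by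
    apply φB_inj
    rw [map_sum, map_zero]
    exact hT2
  have hAv2 : ∑ m ∈ T, (C (ρ m) * ∏ i, (X i : Av' l) ^ (N - m i)) = 0 := by
    calc ∑ m ∈ T, (C (ρ m) * ∏ i, (X i : Av' l) ^ (N - m i))
        = ∑ m ∈ T, (MvPolynomial.aeval (fun i => (1 : Av' l) - X i))
            (C (ρ m) * ∏ i, ((1 : Av' l) - X i) ^ (N - m i)) := by
          refine Finset.sum_congr rfl fun m hm => ?_
          rw [map_mul, map_prod]
          congr 1
          · rw [MvPolynomial.aeval_C]
            rfl
          · refine Finset.prod_congr rfl fun i _ => ?_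
            rw [map_pow, map_sub, map_one, MvPolynomial.aeval_X, sub_sub_cancel]
      _ = 0 := by rw [← map_sum, hAv, map_zero]
  have hmono : ∑ m ∈ T,
      MvPolynomial.monomial (Finsupp.equivFunOnFinite.symm fun i => N - m i) (ρ m) = 0 := by
    rw [← hAv2]
    refine Finset.sum_congr rfl fun m hm => ?_
    rw [prod_X_pow_univ, C_mul_monomial, mul_one]
  have hfinal : ρ m₁ = 0 := by
    have hcoeff := congrArg
      (MvPolynomial.coeff (Finsupp.equivFunOnFinite.symm fun i => N - m₁ i)) hmono
    rw [MvPolynomial.coeff_sum, MvPolynomial.coeff_zero] at hcoeff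
    rw [Finset.sum_eq_single_of_mem m₁ hm₁T] at hcoeff
    · rwa [MvPolynomial.coeff_monomial, if_pos rfl] at hcoeff
    · intro m hm hne
      rw [MvPolynomial.coeff_monomial, if_neg]
      intro hξ
      apply hne
      funext i
      have h7 : N - m i = N - m₁ i := by
        have := congrArg (fun g : (Fin l) →₀ ℕ => g i) hξ
        simpa using this
      have h8 := hmiN m hm i
      have h9 := hmiN m₁ hm₁T i
      omega
  exact hρne m₁ hm₁T hfinal

end
end

section
/- For every m ∈ ℕ^l the function X_m is symmetric in its two groups of variables: ∑_{0 ≤ a ≤ m} J_{m−a}(z) J_a(w) q^{W(a)} w^a = ∑_{0 ≤ a ≤ m} J_{m−a}(w) J_a(z) q^{W(a)} z^a, i.e. X_m(z,w) = X_m(w,z) in ℚ(q, z_1,…,z_l, w_1,…,w_l). -/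
/- STATEMENT 11: symmetry X_m(z,w) = X_m(w,z) in ℚ(q,z_1,…,z_l,w_1,…,w_l),
   where X_m(z,w) = ∑_{0≤a≤m} J_{m−a}(z) J_a(w) q^{W(a)} w^a and (J_m) is the
   unique solution of the fermionic recursion (for a simply-laced Cartan
   matrix C) in the corresponding group of variables. -/

noncomputable section

open scoped BigOperators

/-- The field ℚ(q, z_1, …, z_l, w_1, …, w_l). -/
abbrev F11 (l : ℕ) : Type :=
  FractionRing (MvPolynomial (Option (Fin l ⊕ Fin l)) ℚ)

/-- the variable q -/
def q11 (l : ℕ) : F11 l :=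
  algebraMap (MvPolynomial (Option (Fin l ⊕ Fin l)) ℚ) (F11 l) (MvPolynomial.X none)

/-- the variables z_i -/
def z11 (l : ℕ) (i : Fin l) : F11 l :=
  algebraMap (MvPolynomial (Option (Fin l ⊕ Fin l)) ℚ) (F11 l)
    (MvPolynomial.X (some (Sum.inl i)))

/-- the variables w_i -/
def w11 (l : ℕ) (i : Fin l) : F11 l :=
  algebraMap (MvPolynomial (Option (Fin l ⊕ Fin l)) ℚ) (F11 l)
    (MvPolynomial.X (some (Sum.inr i)))

/-- `W(a) = (1/2)∑ C_{ij} a_i a_j − ∑ a_i`  (the double sum is even, so integer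
division by 2 gives the exact value). -/
def W11 {l : ℕ} (C : Matrix (Fin l) (Fin l) ℤ) (a : Fin l → ℕ) : ℤ :=
  (∑ i, ∑ j, C i j * a i * a j) / 2 - ∑ i, (a i : ℤ)

/-- `(q)_n = ∏_{k=1}^n (1 − q^k)` -/
def qP {F : Type} [Field F] (q : F) (n : ℕ) : F :=
  ∏ k ∈ Finset.range n, (1 - q ^ (k + 1))

/-- `J` is the family satisfying `J 0 = 1` and the fermionic recursion with
variables `q`, `z` (simply-laced case). -/
def IsFermC {l : ℕ} (C : Matrix (Fin l) (Fin l) ℤ)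
    {F : Type} [Field F] (q : F) (z : Fin l → F) (J : (Fin l → ℕ) → F) : Prop :=
  J 0 = 1 ∧ ∀ m : Fin l → ℕ, J m = ∑ a ∈ Finset.Iic m,
    (∏ i, z i ^ a i) * q ^ (W11 C a) *
      (∏ i, qP q (m i - a i))⁻¹ * J a

theorem stmt_11 (l : ℕ) (hl : 1 ≤ l) (C : Matrix (Fin l) (Fin l) ℤ)
    (hsym : C.IsSymm) (hdiag : ∀ i, C i i = 2)
    (hoff : ∀ i j, i ≠ j → C i j = 0 ∨ C i j = -1)
    (hposdef : ∀ x : Fin l → ℤ, x ≠ 0 → 0 < ∑ i, ∑ j, C i j * x i * x j)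
    (Jz Jw : (Fin l → ℕ) → F11 l)
    (hJz : IsFermC C (q11 l) (z11 l) Jz)
    (hJw : IsFermC C (q11 l) (w11 l) Jw) :
    ∀ m : Fin l → ℕ,
      ∑ a ∈ Finset.Iic m,
        Jz (m - a) * Jw a * q11 l ^ (W11 C a) * ∏ i, w11 l i ^ a i
      = ∑ a ∈ Finset.Iic m,
        Jw (m - a) * Jz a * q11 l ^ (W11 C a) * ∏ i, z11 l i ^ a i := by
  intro m
  set T : (Fin l → ℕ) → (Fin l → ℕ) → F11 l := fun a b =>
    ((∏ i, z11 l i ^ b i) * q11 l ^ (W11 C b) *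
      (∏ i, qP (q11 l) (m i - (a i + b i)))⁻¹ * Jz b) *
      (Jw a * q11 l ^ (W11 C a) * ∏ i, w11 l i ^ a i) with hT
  have hmem : ∀ a b : Fin l → ℕ, a ∈ Finset.Iic m ∧ b ∈ Finset.Iic (m - a)
      ↔ a ∈ Finset.Iic (m - b) ∧ b ∈ Finset.Iic m := by
    intro a b
    simp only [Finset.mem_Iic, Pi.le_def, Pi.sub_apply]
    constructor <;> rintro ⟨h1, h2⟩ <;>
      exact ⟨fun i => by have := h1 i; have := h2 i; omega,
             fun i => by have := h1 i; have := h2 i; omega⟩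
  calc
    ∑ a ∈ Finset.Iic m, Jz (m - a) * Jw a * q11 l ^ (W11 C a) * ∏ i, w11 l i ^ a i
        = ∑ a ∈ Finset.Iic m, ∑ b ∈ Finset.Iic (m - a), T a b := by
      refine Finset.sum_congr rfl fun a ha => ?_
      rw [hJz.2 (m - a), Finset.sum_mul, Finset.sum_mul, Finset.sum_mul]
      refine Finset.sum_congr rfl fun b hb => ?_
      have hprod : (∏ i, qP (q11 l) ((m - a) i - b i))
          = ∏ i, qP (q11 l) (m i - (a i + b i)) := by
        refine Finset.prod_congr rfl fun i _ => ?_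
        congr 1
        simp only [Pi.sub_apply]
        omega
      rw [hT, hprod]
      ring
    _ = ∑ b ∈ Finset.Iic m, ∑ a ∈ Finset.Iic (m - b), T a b :=
      Finset.sum_comm' hmem
    _ = ∑ b ∈ Finset.Iic m, Jw (m - b) * Jz b * q11 l ^ (W11 C b) * ∏ i, z11 l i ^ b i := by
      refine Finset.sum_congr rfl fun b hb => ?_
      rw [hJw.2 (m - b), Finset.sum_mul, Finset.sum_mul, Finset.sum_mul]
      refine Finset.sum_congr rfl fun a ha => ?_
      have hprod : (∏ i, qP (q11 l) ((m - b) i - a i))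
          = ∏ i, qP (q11 l) (m i - (a i + b i)) := by
        refine Finset.prod_congr rfl fun i _ => ?_
        congr 1
        simp only [Pi.sub_apply]
        omega
      rw [hT, hprod]
      ring

end
end
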